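/- arXiv:1512.06499 — 7 statements merged into one kernel-verified Lean document; each statement's English description precedes it below -/
import Mathlib

section
/- Let P be a probability distribution on X = {1,2,3,…} with P(1) ≥ P(2) ≥ ⋯, let ε ∈ [0,1), and let k* be the minimal integer with ∑_{i=1}^{k*} P(i) ≥ 1−ε. Define Q*(i) = P(i) for i < k*, Q*(k*) = 1−ε−∑_{i=1}^{k*−1} P(i), and Q*(i) = 0 for i > k*. Then for all α ∈ (0,1), the infimum defining r_α^ε(P) := inf_{Q ∈ B^ε(P)} ∑_i Q(i)^α is attained by Q*, i.e., ∑_i Q*(i)^α ≤ ∑_i Q(i)^α for all Q ∈ B^ε(P). -/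
open scoped ENNReal NNReal
open Finset

/-- The smoothing set `B^ε(P)`. -/
def smoothSet {X : Type*} (P : X → ℝ≥0∞) (ε : ℝ) : Set (X → ℝ≥0∞) :=
  {Q | (∀ x, Q x ≤ P x) ∧ ENNReal.ofReal (1 - ε) ≤ ∑' x, Q x}

/-- The explicit truncated distribution `Q*` for a non-increasingly sorted `P`
(indexed by `ℕ`, so the paper's atoms `1,…,k*` are indices `0,…,k-1`):
`Q*(i) = P(i)` for `i+1 < k`, `Q*(k-1) = 1 - ε - ∑_{i<k-1} P(i)`, and `0` beyond. -/
noncomputable def Qstar (P : ℕ → ℝ≥0∞) (ε : ℝ) (k : ℕ) : ℕ → ℝ≥0∞ := fun i =>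
  if i + 1 < k then P i
  else if i + 1 = k then ENNReal.ofReal (1 - ε) - ∑ j ∈ Finset.range (k - 1), P j
  else 0

section helpers

variable {α : ℝ}

/-- Tangent-line (Bernoulli) inequality for `x ^ α`. -/
lemma tangent_rpow (hα1 : 0 < α) (hα2 : α < 1) {c a : ℝ} (hc : 0 < c) (ha : 0 ≤ a) :
    a ^ α ≤ c ^ α + α * c ^ (α - 1) * (a - c) := by
  have hs : (-1 : ℝ) ≤ a / c - 1 := by
    have : 0 ≤ a / c := div_nonneg ha hc.le
    linarith
  have hb := rpow_one_add_le_one_add_mul_self hs hα1.le hα2.le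
  have h1 : (1 : ℝ) + (a / c - 1) = a / c := by ring
  rw [h1] at hb
  have hcα : (0 : ℝ) < c ^ α := Real.rpow_pos_of_pos hc α
  have h2 : a ^ α = (a / c) ^ α * c ^ α := by
    rw [Real.div_rpow ha hc.le, div_mul_cancel₀]
    exact hcα.ne'
  have h3 : c ^ (α - 1) = c ^ α / c := by
    rw [Real.rpow_sub hc, Real.rpow_one]
  calc a ^ α = (a / c) ^ α * c ^ α := h2
    _ ≤ (1 + α * (a / c - 1)) * c ^ α := by
        exact mul_le_mul_of_nonneg_right hb hcα.le
    _ = c ^ α + α * (c ^ α / c) * (a - c) := by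
        field_simp
    _ = c ^ α + α * c ^ (α - 1) * (a - c) := by rw [h3]

/-- Abel-summation positivity. -/
lemma abel_nonneg (g d : ℕ → ℝ) (n : ℕ)
    (hg : ∀ i, i + 1 < n → g i ≤ g (i + 1))
    (hD : ∀ m, m ≤ n → ∑ i ∈ range m, d i ≤ 0)
    (hDn : ∑ i ∈ range n, d i = 0) :
    0 ≤ ∑ i ∈ range n, g i * d i := by
  have hparts := Finset.sum_range_by_parts g d n
  simp only [smul_eq_mul] at hparts
  rw [hparts, hDn, mul_zero, zero_sub, le_neg, neg_zero]
  apply Finset.sum_nonpos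
  intro i hi
  rw [Finset.mem_range] at hi
  have h1 : 0 ≤ g (i + 1) - g i := sub_nonneg.2 (hg i (by omega))
  have h2 : ∑ j ∈ range (i + 1), d j ≤ 0 := hD (i + 1) (by omega)
  exact mul_nonpos_of_nonneg_of_nonpos h1 h2

/-- The core HLP/majorization inequality. -/
lemma core_ineq (hα1 : 0 < α) (hα2 : α < 1) :
    ∀ (n : ℕ) (a c : ℕ → ℝ), Antitone a → Antitone c → (∀ i, 0 ≤ a i) → (∀ i, 0 ≤ c i) →
      (∀ m, m ≤ n → ∑ i ∈ range m, c i ≤ ∑ i ∈ range m, a i) →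
      (∑ i ∈ range n, c i = ∑ i ∈ range n, a i) →
      ∑ i ∈ range n, a i ^ α ≤ ∑ i ∈ range n, c i ^ α := by
  intro n
  induction n with
  | zero => simp
  | succ n ih =>
    intro a c ha hc ha0 hc0 hmaj heq
    by_cases hcn : 0 < c n
    · -- all entries of `c` on `range (n+1)` are positive; Abel argument
      have hcpos : ∀ i, i ≤ n → 0 < c i := fun i hi => lt_of_lt_of_le hcn (hc hi)
      set g : ℕ → ℝ := fun i => α * c i ^ (α - 1) with hgdef
      set d : ℕ → ℝ := fun i => c i - a i with hddef
      have key : ∀ i ∈ range (n + 1), a i ^ α ≤ c i ^ α + g i * (a i - c i) := by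
        intro i hi
        rw [Finset.mem_range] at hi
        exact tangent_rpow hα1 hα2 (hcpos i (by omega)) (ha0 i)
      have habel : 0 ≤ ∑ i ∈ range (n + 1), g i * d i := by
        apply abel_nonneg
        · intro i hi
          have h1 : 0 < c (i + 1) := hcpos (i + 1) (by omega)
          have h2 : c (i + 1) ≤ c i := hc (Nat.le_succ i)
          exact mul_le_mul_of_nonneg_left
            (Real.rpow_le_rpow_of_nonpos h1 h2 (by linarith)) hα1.le
        · intro m hm
          have := hmaj m hm
          simp only [hddef]
          rw [Finset.sum_sub_distrib]
          linarith
        · simp only [hddef]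
          rw [Finset.sum_sub_distrib]
          linarith
      calc ∑ i ∈ range (n + 1), a i ^ α
          ≤ ∑ i ∈ range (n + 1), (c i ^ α + g i * (a i - c i)) := Finset.sum_le_sum key
        _ = ∑ i ∈ range (n + 1), c i ^ α - ∑ i ∈ range (n + 1), g i * d i := by
            rw [Finset.sum_add_distrib, sub_eq_add_neg, ← Finset.sum_neg_distrib]
            congr 1
            apply Finset.sum_congr rfl
            intro i _
            simp only [hddef]
            ring
        _ ≤ ∑ i ∈ range (n + 1), c i ^ α := by linarith
    · -- last entry of `c` is zero: peel it off
      have hcn0 : c n = 0 := le_antisymm (not_lt.1 hcn) (hc0 n)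
      have hCsucc : ∑ i ∈ range (n + 1), c i = ∑ i ∈ range n, c i := by
        rw [Finset.sum_range_succ, hcn0, add_zero]
      have hAle : ∑ i ∈ range n, c i ≤ ∑ i ∈ range n, a i := hmaj n (Nat.le_succ n)
      have hAsucc : ∑ i ∈ range (n + 1), a i = ∑ i ∈ range n, a i + a n :=
        Finset.sum_range_succ a n
      have han : a n = 0 := le_antisymm (by rw [hCsucc] at heq; linarith [ha0 n]) (ha0 n)
      rw [Finset.sum_range_succ, Finset.sum_range_succ, hcn0, han,
        Real.zero_rpow hα1.ne', add_zero, add_zero]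
      apply ih a c ha hc ha0 hc0
      · intro m hm
        exact hmaj m (le_trans hm (Nat.le_succ n))
      · rw [hCsucc] at heq
        linarith [hAsucc ▸ heq, han]

end helpers


section helpers2

variable {α : ℝ}

/-- Sum over any finset is at most the sum of the top `card` values of an antitone sequence. -/
lemma sum_finset_le_sum_range (p : ℕ → ℝ) (hp : Antitone p) (hp0 : ∀ i, 0 ≤ p i) :
    ∀ (S : Finset ℕ), ∑ j ∈ S, p j ≤ ∑ i ∈ range S.card, p i := by
  suffices h : ∀ (n : ℕ) (S : Finset ℕ), S.card = n → ∑ j ∈ S, p j ≤ ∑ i ∈ range n, p i by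
    intro S; exact h S.card S rfl
  intro n
  induction n with
  | zero => intro S hS; rw [Finset.card_eq_zero] at hS; simp [hS]
  | succ n ih =>
    intro S hS
    have hne : S.Nonempty := Finset.card_pos.1 (by omega)
    set M := S.max' hne with hM
    have hMem : M ∈ S := S.max'_mem hne
    have hsub : S ⊆ range (M + 1) := by
      intro j hj
      rw [Finset.mem_range]
      exact Nat.lt_succ_of_le (S.le_max' j hj)
    have hcard : n + 1 ≤ M + 1 := by
      have := Finset.card_le_card hsub
      rw [hS, Finset.card_range] at this
      exact this
    have hnM : n ≤ M := by omega
    have herase : (S.erase M).card = n := by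
      rw [Finset.card_erase_of_mem hMem, hS]
      omega
    calc ∑ j ∈ S, p j = ∑ j ∈ S.erase M, p j + p M := (Finset.sum_erase_add S p hMem).symm
      _ ≤ ∑ i ∈ range n, p i + p n := add_le_add (herase ▸ ih (S.erase M) herase) (hp hnM)
      _ = ∑ i ∈ range (n + 1), p i := (Finset.sum_range_succ p n).symm

/-- Existence of a non-increasing rearrangement of `q` on `range n`. -/
lemma sort_exists (p q : ℕ → ℝ) (hp : Antitone p) (hp0 : ∀ i, 0 ≤ p i)
    (hq0 : ∀ i, 0 ≤ q i) (hqp : ∀ i, q i ≤ p i) (n : ℕ) :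
    ∃ c : ℕ → ℝ, Antitone c ∧ (∀ i, 0 ≤ c i) ∧
      (∀ g : ℝ → ℝ, ∑ i ∈ range n, g (c i) = ∑ i ∈ range n, g (q i)) ∧
      (∀ m, m ≤ n → ∑ i ∈ range m, c i ≤ ∑ i ∈ range m, p i) := by
  classical
  set f : Fin n → ℝ := fun i => q i with hf
  set τ : Equiv.Perm (Fin n) := (Fin.revPerm).trans (Tuple.sort f) with hτ
  set c : ℕ → ℝ := fun i => if h : i < n then f (τ ⟨i, h⟩) else 0 with hc
  have hmono := Tuple.monotone_sort f
  have hcval : ∀ (i : ℕ) (h : i < n), c i = f (Tuple.sort f (Fin.rev ⟨i, h⟩)) := by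
    intro i h
    simp only [hc, dif_pos h, hτ, Equiv.trans_apply, Fin.revPerm_apply]
  have hc0 : ∀ i, 0 ≤ c i := by
    intro i
    by_cases h : i < n
    · rw [hcval i h]; exact hq0 _
    · simp [hc, dif_neg h]
  refine ⟨c, ?_, hc0, ?_, ?_⟩
  · apply antitone_nat_of_succ_le
    intro i
    by_cases h1 : i + 1 < n
    · have h0 : i < n := by omega
      rw [hcval _ h1, hcval _ h0]
      apply hmono
      rw [Fin.rev_le_rev]
      exact Fin.mk_le_mk.2 (Nat.le_succ i)
    · have : c (i + 1) = 0 := by simp [hc, dif_neg h1]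
      rw [this]; exact hc0 i
  · intro g
    rw [← Fin.sum_univ_eq_sum_range (fun i => g (c i)) n,
        ← Fin.sum_univ_eq_sum_range (fun i => g (q i)) n]
    have : ∀ i : Fin n, g (c i.val) = (fun j : Fin n => g (f j)) (τ i) := by
      intro i
      have h : (i : ℕ) < n := i.isLt
      simp only [hc, dif_pos h]
    rw [Finset.sum_congr rfl (fun i _ => this i)]
    exact Equiv.sum_comp τ (fun j : Fin n => g (f j))
  · intro m hm
    have hemb : Function.Injective (fun j : Fin m => ((τ (Fin.castLE hm j)) : ℕ)) := by
      intro a b hab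
      simp only at hab
      exact (Fin.castLE_injective hm) (τ.injective (Fin.val_injective hab))
    set S : Finset ℕ := Finset.map ⟨_, hemb⟩ Finset.univ with hS
    have hcardS : S.card = m := by simp [hS]
    have h1 : ∑ i ∈ range m, c i = ∑ j ∈ S, q j := by
      rw [hS, Finset.sum_map, ← Fin.sum_univ_eq_sum_range c m]
      apply Finset.sum_congr rfl
      intro j _
      have h : (j : ℕ) < n := lt_of_lt_of_le j.isLt hm
      rw [hcval _ h]
      simp only [Function.Embedding.coeFn_mk]
      congr 1
    rw [h1]
    calc ∑ j ∈ S, q j ≤ ∑ j ∈ S, p j := Finset.sum_le_sum (fun j _ => hqp j)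
      _ ≤ ∑ i ∈ range S.card, p i := sum_finset_le_sum_range p hp hp0 S
      _ = ∑ i ∈ range m, p i := by rw [hcardS]

/-- Partial sums of the greedy truncation. -/
lemma trunc_sum (c : ℕ → ℝ) (hc0 : ∀ i, 0 ≤ c i) (T : ℝ) (hT : 0 ≤ T) (m : ℕ) :
    ∑ i ∈ range m, min (c i) (max (T - ∑ j ∈ range i, c j) 0)
      = min (∑ i ∈ range m, c i) T := by
  induction m with
  | zero => simp [hT]
  | succ m ih =>
    rw [Finset.sum_range_succ, Finset.sum_range_succ, ih]
    rcases le_or_gt T (∑ j ∈ range m, c j) with h | h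
    · have h2 : max (T - ∑ j ∈ range m, c j) 0 = 0 := max_eq_right (by linarith)
      rw [h2, min_eq_right (hc0 m), min_eq_right h, min_eq_right (by linarith [hc0 m]), add_zero]
    · have h2 : max (T - ∑ j ∈ range m, c j) 0 = T - ∑ j ∈ range m, c j :=
        max_eq_left (by linarith)
      rw [h2, min_eq_left h.le, ← min_add_add_left]
      congr 1
      ring

lemma trunc_le (c : ℕ → ℝ) (T : ℝ) (i : ℕ) :
    min (c i) (max (T - ∑ j ∈ range i, c j) 0) ≤ c i := min_le_left _ _

lemma trunc_nonneg (c : ℕ → ℝ) (hc0 : ∀ i, 0 ≤ c i) (T : ℝ) (i : ℕ) :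
    0 ≤ min (c i) (max (T - ∑ j ∈ range i, c j) 0) :=
  le_min (hc0 i) (le_max_right _ _)

lemma trunc_antitone (c : ℕ → ℝ) (hc0 : ∀ i, 0 ≤ c i) (hc : Antitone c) (T : ℝ) :
    Antitone (fun i => min (c i) (max (T - ∑ j ∈ range i, c j) 0)) := by
  apply antitone_nat_of_succ_le
  intro i
  apply le_min
  · exact le_trans (min_le_left _ _) (hc (Nat.le_succ i))
  · refine le_trans (min_le_right _ _) (max_le_max ?_ le_rfl)
    apply sub_le_sub_left
    rw [Finset.sum_range_succ]
    linarith [hc0 i]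

/-- Main real inequality: the greedy truncation of `p` at level `T` minimizes `∑ (·)^α`. -/
lemma main_real (hα1 : 0 < α) (hα2 : α < 1) (p q : ℕ → ℝ) (hp : Antitone p)
    (hp0 : ∀ i, 0 ≤ p i) (hq0 : ∀ i, 0 ≤ q i) (hqp : ∀ i, q i ≤ p i)
    (n : ℕ) (T : ℝ) (hT0 : 0 ≤ T) (hTq : T ≤ ∑ i ∈ range n, q i) :
    ∑ i ∈ range n, (min (p i) (max (T - ∑ j ∈ range i, p j) 0)) ^ α
      ≤ ∑ i ∈ range n, (q i) ^ α := by
  obtain ⟨c, hcA, hc0, hcg, hcmaj⟩ := sort_exists p q hp hp0 hq0 hqp n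
  set a : ℕ → ℝ := fun i => min (p i) (max (T - ∑ j ∈ range i, p j) 0) with ha
  set c' : ℕ → ℝ := fun i => min (c i) (max (T - ∑ j ∈ range i, c j) 0) with hc'
  have hCn : ∑ i ∈ range n, c i = ∑ i ∈ range n, q i := hcg id
  have hcore : ∑ i ∈ range n, a i ^ α ≤ ∑ i ∈ range n, c' i ^ α := by
    apply core_ineq hα1 hα2 n a c' (trunc_antitone p hp0 hp T) (trunc_antitone c hc0 hcA T)
      (trunc_nonneg p hp0 T) (trunc_nonneg c hc0 T)
    · intro m hm
      rw [ha, hc', trunc_sum p hp0 T hT0 m, trunc_sum c hc0 T hT0 m]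
      exact min_le_min (hcmaj m hm) le_rfl
    · rw [ha, hc', trunc_sum p hp0 T hT0 n, trunc_sum c hc0 T hT0 n, hCn]
      rw [min_eq_right hTq, min_eq_right (le_trans hTq (hCn ▸ hcmaj n le_rfl))]
  calc ∑ i ∈ range n, a i ^ α ≤ ∑ i ∈ range n, c' i ^ α := hcore
    _ ≤ ∑ i ∈ range n, c i ^ α := by
        apply Finset.sum_le_sum
        intro i _
        exact Real.rpow_le_rpow (trunc_nonneg c hc0 T i) (trunc_le c T i) hα1.le
    _ = ∑ i ∈ range n, q i ^ α := hcg (· ^ α)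

end helpers2

section glue

variable {α : ℝ}

lemma rpow_subadd (hα1 : 0 < α) (hα2 : α < 1) {x y : ℝ} (hx : 0 ≤ x) (hy : 0 ≤ y) :
    (x + y) ^ α ≤ x ^ α + y ^ α := by
  have h := NNReal.rpow_add_le_add_rpow (⟨x, hx⟩ : ℝ≥0) (⟨y, hy⟩ : ℝ≥0) hα1.le hα2.le
  have h2 := NNReal.coe_le_coe.2 h
  push_cast at h2
  exact h2

end glue


/-- For `P` sorted non-increasingly, `ε ∈ [0,1)`, `k*` the minimal integer with
`∑_{i=1}^{k*} P(i) ≥ 1-ε`, and any `α ∈ (0,1)`, the infimum defining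
`r_α^ε(P)` is attained by `Q*`: `∑_i Q*(i)^α ≤ ∑_i Q(i)^α` for every `Q ∈ B^ε(P)`. -/
theorem Qstar_minimizes (P : ℕ → ℝ≥0∞) (hP : ∑' i, P i = 1)
    (hmono : Antitone P) (ε α : ℝ) (hε0 : 0 ≤ ε) (hε1 : ε < 1)
    (hα : α ∈ Set.Ioo (0 : ℝ) 1) (k : ℕ)
    (hk : ENNReal.ofReal (1 - ε) ≤ ∑ i ∈ Finset.range k, P i)
    (hmin : ∀ j < k, ∑ i ∈ Finset.range j, P i < ENNReal.ofReal (1 - ε)) :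
    ∀ Q ∈ smoothSet P ε, ∑' i, (Qstar P ε k i) ^ α ≤ ∑' i, Q i ^ α := by

  obtain ⟨hα1, hα2⟩ := hα
  intro Q hQ
  obtain ⟨hQle, hQtsum⟩ := hQ
  set E : ℝ := 1 - ε with hEdef
  have hE : 0 < E := by simp only [hEdef]; linarith
  -- basic finiteness
  have hPle : ∀ i, P i ≤ 1 := fun i => hP ▸ ENNReal.le_tsum i
  have hPne : ∀ i, P i ≠ ⊤ := fun i => ne_top_of_le_ne_top ENNReal.one_ne_top (hPle i)
  have hQne : ∀ i, Q i ≠ ⊤ := fun i => ne_top_of_le_ne_top (hPne i) (hQle i)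
  set p : ℕ → ℝ := fun i => (P i).toReal with hpdef
  set q : ℕ → ℝ := fun i => (Q i).toReal with hqdef
  have hpA : Antitone p := fun i j hij => ENNReal.toReal_mono (hPne i) (hmono hij)
  have hp0 : ∀ i, 0 ≤ p i := fun i => ENNReal.toReal_nonneg
  have hq0 : ∀ i, 0 ≤ q i := fun i => ENNReal.toReal_nonneg
  have hqp : ∀ i, q i ≤ p i := fun i => ENNReal.toReal_mono (hPne i) (hQle i)
  set Pr : ℕ → ℝ := fun m => ∑ i ∈ Finset.range m, p i with hPrdef
  have hSfin : ∀ m, ∑ i ∈ Finset.range m, P i ≠ ⊤ := fun m =>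
    ne_top_of_le_ne_top ENNReal.one_ne_top (hP ▸ ENNReal.sum_le_tsum (Finset.range m))
  have hStoReal : ∀ m, (∑ i ∈ Finset.range m, P i).toReal = Pr m := fun m =>
    ENNReal.toReal_sum (fun i _ => hPne i)
  have hSofReal : ∀ m, ∑ i ∈ Finset.range m, P i = ENNReal.ofReal (Pr m) := fun m => by
    rw [← hStoReal m, ENNReal.ofReal_toReal (hSfin m)]
  have hPk : E ≤ Pr k := by
    have := (ENNReal.ofReal_le_iff_le_toReal (hSfin k)).1 hk
    rwa [hStoReal k] at this
  have hPj : ∀ j, j < k → Pr j < E := by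
    intro j hj
    have := (ENNReal.lt_ofReal_iff_toReal_lt (hSfin j)).1 (hmin j hj)
    rwa [hStoReal j] at this
  have hk1 : 0 < k := by
    rcases Nat.eq_zero_or_pos k with h0 | h
    · exfalso
      rw [h0, Finset.range_zero, Finset.sum_empty, le_zero_iff, ENNReal.ofReal_eq_zero] at hk
      linarith
    · exact h
  have hPrMono : Monotone Pr := fun m m' h =>
    Finset.sum_le_sum_of_subset_of_nonneg (Finset.range_subset_range.2 h) (fun i _ _ => hp0 i)
  set qs : ℕ → ℝ := fun i => min (p i) (max (E - Pr i) 0) with hqsdef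
  have hqs0 : ∀ i, 0 ≤ qs i := fun i => le_min (hp0 i) (le_max_right _ _)
  -- identification of Qstar
  have hQsId : ∀ i, Qstar P ε k i = ENNReal.ofReal (qs i) := by
    intro i
    unfold Qstar
    by_cases h1 : i + 1 < k
    · rw [if_pos h1]
      have hlt : Pr (i + 1) < E := hPj (i + 1) h1
      have hsucc : Pr (i + 1) = Pr i + p i := Finset.sum_range_succ p i
      have hmax : max (E - Pr i) 0 = E - Pr i := max_eq_left (by linarith [hPrMono (Nat.le_succ i) |>.trans hlt.le, hp0 i, hsucc ▸ hlt])
      have hqsi : qs i = p i := by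
        rw [hqsdef]
        simp only
        rw [hmax, min_eq_left (by linarith [hsucc ▸ hlt])]
      rw [hqsi, ENNReal.ofReal_toReal (hPne i)]
    · by_cases h2 : i + 1 = k
      · rw [if_neg h1, if_pos h2]
        have hik : i < k := by omega
        have hk1i : k - 1 = i := by omega
        have hlt : Pr i < E := hPj i hik
        have hsucc : Pr (i + 1) = Pr i + p i := Finset.sum_range_succ p i
        have hEle : E - Pr i ≤ p i := by
          have : E ≤ Pr (i + 1) := h2 ▸ hPk
          linarith [hsucc ▸ this]
        have hqsi : qs i = E - Pr i := by
          rw [hqsdef]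
          simp only
          rw [max_eq_left (by linarith), min_eq_right hEle]
        rw [hqsi, hk1i, hSofReal i, ENNReal.ofReal_sub E (by positivity)]
      · rw [if_neg h1, if_neg h2]
        have hik : k ≤ i := by omega
        have hPrik : E ≤ Pr i := le_trans hPk (hPrMono hik)
        have hqsi : qs i = 0 := by
          rw [hqsdef]
          simp only
          rw [max_eq_right (by linarith), min_eq_right (hp0 i)]
        rw [hqsi, ENNReal.ofReal_zero]
  -- LHS as a finite sum
  have hLHS : ∑' i, (Qstar P ε k i) ^ α
      = ENNReal.ofReal (∑ i ∈ Finset.range k, (qs i) ^ α) := by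
    rw [tsum_eq_sum (s := Finset.range k) ?_]
    · rw [ENNReal.ofReal_sum_of_nonneg (fun i _ => Real.rpow_nonneg (hqs0 i) α)]
      apply Finset.sum_congr rfl
      intro i _
      rw [hQsId i, ENNReal.ofReal_rpow_of_nonneg (hqs0 i) hα1.le]
    · intro i hi
      rw [Finset.mem_range] at hi
      have h1 : ¬ i + 1 < k := by omega
      have h2 : ¬ i + 1 = k := by omega
      unfold Qstar
      rw [if_neg h1, if_neg h2, ENNReal.zero_rpow_of_pos hα1]
  -- RHS handling
  by_cases htop : ∑' i, Q i ^ α = ⊤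
  · rw [htop]; exact le_top
  have hQαne : ∀ i, Q i ^ α ≠ ⊤ := fun i => ENNReal.rpow_ne_top_of_nonneg hα1.le (hQne i)
  have hRreal : (∑' i, Q i ^ α).toReal = ∑' i, (q i) ^ α := by
    rw [ENNReal.tsum_toReal_eq hQαne]
    apply tsum_congr
    intro i
    rw [hqdef]
    exact (ENNReal.toReal_rpow (Q i) α).symm
  have hsumqα : Summable (fun i => (q i) ^ α) := by
    have := ENNReal.summable_toReal htop
    convert this using 2 with i
    exact ENNReal.toReal_rpow (Q i) α
  rw [hLHS]
  rw [← ENNReal.ofReal_toReal htop]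
  apply ENNReal.ofReal_le_ofReal
  rw [hRreal]
  -- real inequality, with an η of room
  apply le_of_forall_pos_le_add
  intro η hη
  have hkR : (0 : ℝ) < (k : ℝ) := Nat.cast_pos.2 hk1
  set δ : ℝ := (η / k) ^ (α⁻¹) with hδdef
  have hδpos : 0 < δ := Real.rpow_pos_of_pos (div_pos hη hkR) _
  have hδα : (k : ℝ) * δ ^ α = η := by
    rw [hδdef, Real.rpow_inv_rpow (div_pos hη hkR).le hα1.ne']
    field_simp
  -- summability of q and choice of n
  have hQttop : ∑' i, Q i ≠ ⊤ := by
    have := ENNReal.tsum_le_tsum hQle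
    rw [hP] at this
    exact ne_top_of_le_ne_top ENNReal.one_ne_top this
  have hqsum : Summable q := ENNReal.summable_toReal hQttop
  have hqts : E ≤ ∑' i, q i := by
    have h1 := (ENNReal.ofReal_le_iff_le_toReal hQttop).1 hQtsum
    rwa [ENNReal.tsum_toReal_eq hQne] at h1
  have hev := (hqsum.hasSum.tendsto_sum_nat.eventually
    (eventually_gt_nhds (show E - δ < ∑' i, q i by linarith))).and (Filter.eventually_ge_atTop k)
  obtain ⟨n, hn, hkn⟩ := hev.exists
  set T : ℝ := min (∑ i ∈ Finset.range n, q i) E with hTdef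
  have hT0 : 0 ≤ T := le_min (Finset.sum_nonneg fun i _ => hq0 i) hE.le
  have hTq : T ≤ ∑ i ∈ Finset.range n, q i := min_le_left _ _
  have hTE : T ≤ E := min_le_right _ _
  have hTδ : E - T ≤ δ := by
    have : E - δ ≤ T := le_min (by linarith) (by linarith)
    linarith
  have hmain := main_real hα1 hα2 p q hpA hp0 hq0 hqp n T hT0 hTq
  set aT : ℕ → ℝ := fun i => min (p i) (max (T - Pr i) 0) with haTdef
  have h_aT0 : ∀ i, k ≤ i → aT i ^ α = 0 := by
    intro i hik
    have hPri : E ≤ Pr i := le_trans hPk (hPrMono hik)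
    have : aT i = 0 := by
      rw [haTdef]
      simp only
      rw [max_eq_right (by linarith), min_eq_right (hp0 i)]
    rw [this, Real.zero_rpow hα1.ne']
  have hsum_aT : ∑ i ∈ Finset.range k, aT i ^ α = ∑ i ∈ Finset.range n, aT i ^ α := by
    apply Finset.sum_subset (Finset.range_subset_range.2 hkn)
    intro i _ hik
    rw [Finset.mem_range] at hik
    exact h_aT0 i (by omega)
  have hterm : ∀ i, (qs i) ^ α ≤ aT i ^ α + δ ^ α := by
    intro i
    have haT0 : 0 ≤ aT i := le_min (hp0 i) (le_max_right _ _)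
    have h1 : qs i ≤ aT i + δ := by
      have hmaxle : max (E - Pr i) 0 ≤ max (T - Pr i) 0 + δ := by
        apply max_le
        · have : E - Pr i ≤ (T - Pr i) + δ := by linarith
          linarith [le_max_left (T - Pr i) (0:ℝ)]
        · linarith [le_max_right (T - Pr i) (0:ℝ), hδpos.le]
      rcases le_total (p i) (max (T - Pr i) 0) with h | h
      · calc qs i ≤ p i := min_le_left _ _
          _ = aT i := (min_eq_left h).symm
          _ ≤ aT i + δ := by linarith
      · calc qs i ≤ max (E - Pr i) 0 := min_le_right _ _
          _ ≤ max (T - Pr i) 0 + δ := hmaxle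
          _ = aT i + δ := by rw [haTdef]; simp only; rw [min_eq_right h]
    calc (qs i) ^ α ≤ (aT i + δ) ^ α :=
          Real.rpow_le_rpow (hqs0 i) h1 hα1.le
      _ ≤ aT i ^ α + δ ^ α := rpow_subadd hα1 hα2 haT0 hδpos.le
  calc ∑ i ∈ Finset.range k, (qs i) ^ α
      ≤ ∑ i ∈ Finset.range k, (aT i ^ α + δ ^ α) :=
        Finset.sum_le_sum fun i _ => hterm i
    _ = ∑ i ∈ Finset.range k, aT i ^ α + k * δ ^ α := by
        rw [Finset.sum_add_distrib, Finset.sum_const, Finset.card_range, nsmul_eq_mul]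
    _ = ∑ i ∈ Finset.range n, aT i ^ α + η := by rw [hsum_aT, hδα]
    _ ≤ ∑ i ∈ Finset.range n, (q i) ^ α + η := by
        have := hmain
        simp only [haTdef, hPrdef] at *
        linarith [hmain]
    _ ≤ (∑' i, (q i) ^ α) + η := by
        have := Summable.sum_le_tsum (Finset.range n) (fun i _ => Real.rpow_nonneg (hq0 i) α) hsumqα
        linarith
end

section
/- One-shot converse: for any λ > 0, ε ∈ [0,1), and any variable-length prefix-free code (possibly with a stochastic encoder) with error probability at most ε, the exponential moment of the codeword length satisfies E_P[exp(λ ℓ(X))] ≥ exp(λ H_{1/(1+λ)}^ε(P)). -/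
open scoped ENNReal Classical

/-- `r_α^ε(P) = inf_{Q ∈ B^ε(P)} ∑_x Q(x)^α`. -/
noncomputable def rSmooth {X : Type*} (P : X → ℝ≥0∞) (ε α : ℝ) : ℝ≥0∞ :=
  ⨅ Q ∈ smoothSet P ε, ∑' x, Q x ^ α

/-- The `ε`-smooth Rényi entropy of order `α` (extended-real valued). -/
noncomputable def smoothRenyi {X : Type*} (P : X → ℝ≥0∞) (ε α : ℝ) : EReal :=
  (((1 - α)⁻¹ : ℝ) : EReal) * ENNReal.log (rSmooth P ε α)

/-! ### Auxiliary lemmas -/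

/-- Kraft's inequality for finite prefix-free sets of binary strings, by
induction on a bound `n` on the lengths. -/
private lemma kraft_aux : ∀ (n : ℕ) (F : Finset (List Bool)),
    (∀ c ∈ F, c.length ≤ n) →
    (∀ c₁ ∈ F, ∀ c₂ ∈ F, c₁ <+: c₂ → c₁ = c₂) →
    (∑ c ∈ F, ((2 : ℝ≥0∞)⁻¹) ^ c.length) ≤ 1 := by
  intro n
  induction n with
  | zero =>
    intro F hlen _
    have hsub : F ⊆ {[]} := by
      intro c hc
      have h0 := hlen c hc
      have : c = [] := List.length_eq_zero_iff.mp (Nat.le_zero.mp h0)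
      simp [this]
    refine le_trans (Finset.sum_le_sum_of_subset hsub) ?_
    simp
  | succ n ih =>
    intro F hlen hpf
    by_cases hnil : [] ∈ F
    · have hsub : F ⊆ {[]} := by
        intro c hc
        have := hpf [] hnil c hc (List.nil_prefix)
        simp [← this]
      refine le_trans (Finset.sum_le_sum_of_subset hsub) ?_
      simp
    · have hb : ∀ b : Bool,
          (∑ c ∈ F.filter (fun c => c.head? = some b), ((2 : ℝ≥0∞)⁻¹) ^ c.length) ≤ 2⁻¹ := by
        intro b
        set Fb := F.filter (fun c => c.head? = some b) with hFb
        have hmem : ∀ c ∈ Fb, c = b :: c.tail := by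
          intro c hc
          rw [hFb, Finset.mem_filter] at hc
          obtain ⟨hcF, hhead⟩ := hc
          cases c with
          | nil => simp at hhead
          | cons a t =>
            simp only [List.head?_cons, Option.some.injEq] at hhead
            simp [hhead]
        have hinj : ∀ c₁ ∈ Fb, ∀ c₂ ∈ Fb, c₁.tail = c₂.tail → c₁ = c₂ := by
          intro c₁ h₁ c₂ h₂ h
          rw [hmem c₁ h₁, hmem c₂ h₂, h]
        have hstep : (∑ c ∈ Fb, ((2 : ℝ≥0∞)⁻¹) ^ c.length)
            = 2⁻¹ * ∑ t ∈ Fb.image List.tail, ((2 : ℝ≥0∞)⁻¹) ^ t.length := by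
          rw [Finset.sum_image hinj, Finset.mul_sum]
          refine Finset.sum_congr rfl fun c hc => ?_
          conv_lhs => rw [hmem c hc]
          rw [List.length_cons, pow_succ, mul_comm]
        rw [hstep]
        have hle1 : (∑ t ∈ Fb.image List.tail, ((2 : ℝ≥0∞)⁻¹) ^ t.length) ≤ 1 := by
          refine ih _ ?_ ?_
          · intro t ht
            obtain ⟨c, hc, rfl⟩ := Finset.mem_image.mp ht
            have hcF : c ∈ F := Finset.mem_of_mem_filter _ hc
            have := hlen c hcF
            have hct : c.length = c.tail.length + 1 := by
              conv_lhs => rw [hmem c hc]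
              simp
            omega
          · intro t₁ h₁ t₂ h₂ hpre
            obtain ⟨c₁, hc₁, rfl⟩ := Finset.mem_image.mp h₁
            obtain ⟨c₂, hc₂, rfl⟩ := Finset.mem_image.mp h₂
            have hpre' : c₁ <+: c₂ := by
              rw [hmem c₁ hc₁, hmem c₂ hc₂]
              exact List.cons_prefix_cons.mpr ⟨rfl, hpre⟩
            have := hpf c₁ (Finset.mem_of_mem_filter _ hc₁) c₂
              (Finset.mem_of_mem_filter _ hc₂) hpre'
            rw [this]
        calc 2⁻¹ * ∑ t ∈ Fb.image List.tail, ((2 : ℝ≥0∞)⁻¹) ^ t.length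
            ≤ 2⁻¹ * 1 := mul_le_mul_right hle1 _
          _ = 2⁻¹ := mul_one _
      have hsplit := Finset.sum_filter_add_sum_filter_not F (fun c => c.head? = some false)
        (fun c => ((2 : ℝ≥0∞)⁻¹) ^ c.length)
      have heq : F.filter (fun c => ¬ c.head? = some false)
          = F.filter (fun c => c.head? = some true) := by
        refine Finset.filter_congr fun c hc => ?_
        cases c with
        | nil => exact absurd hc hnil
        | cons a t => cases a <;> simp
      calc (∑ c ∈ F, ((2 : ℝ≥0∞)⁻¹) ^ c.length)
          = (∑ c ∈ F.filter (fun c => c.head? = some false), ((2 : ℝ≥0∞)⁻¹) ^ c.length)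
            + ∑ c ∈ F.filter (fun c => ¬ c.head? = some false), ((2 : ℝ≥0∞)⁻¹) ^ c.length :=
            hsplit.symm
        _ ≤ 2⁻¹ + 2⁻¹ := by
            refine add_le_add (hb false) ?_
            rw [heq]; exact hb true
        _ = 1 := ENNReal.inv_two_add_inv_two

/-- Kraft's inequality for an arbitrary prefix-free set of binary strings. -/
private lemma kraft_tsum (p : List Bool → Prop) [DecidablePred p]
    (hp : ∀ c₁ c₂, p c₁ → p c₂ → c₁ <+: c₂ → c₁ = c₂) :
    (∑' c : List Bool, if p c then ((2 : ℝ≥0∞)⁻¹) ^ c.length else 0) ≤ 1 := by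
  rw [ENNReal.tsum_eq_iSup_sum]
  refine iSup_le fun F => ?_
  rw [← Finset.sum_filter]
  exact kraft_aux ((F.filter p).sup List.length) _ (fun c hc => Finset.le_sup hc)
    (fun c₁ h₁ c₂ h₂ => hp c₁ c₂ (Finset.mem_filter.mp h₁).2 (Finset.mem_filter.mp h₂).2)

private lemma rpow_sum_le {ι : Type*} (s : Finset ι) (f : ι → ℝ≥0∞) {a : ℝ}
    (ha : 0 < a) (ha1 : a ≤ 1) :
    (∑ i ∈ s, f i) ^ a ≤ ∑ i ∈ s, f i ^ a := by
  induction s using Finset.cons_induction with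
  | empty => simp [ENNReal.zero_rpow_of_pos ha]
  | cons i s hi ih =>
    rw [Finset.sum_cons, Finset.sum_cons]
    exact (ENNReal.rpow_add_le_add_rpow _ _ ha.le ha1).trans (add_le_add le_rfl ih)

/-- Countable subadditivity of `x ↦ x ^ a` on `ℝ≥0∞` for `0 < a ≤ 1`. -/
private lemma rpow_tsum_le {ι : Type*} (f : ι → ℝ≥0∞) {a : ℝ} (ha : 0 < a) (ha1 : a ≤ 1) :
    (∑' i, f i) ^ a ≤ ∑' i, f i ^ a := by
  have h : ∀ F : Finset ι, (∑ i ∈ F, f i) ^ a ≤ ∑' i, f i ^ a :=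
    fun F => (rpow_sum_le F f ha ha1).trans (ENNReal.sum_le_tsum F)
  rw [ENNReal.tsum_eq_iSup_sum, ← ENNReal.le_rpow_inv_iff ha]
  exact iSup_le fun F => (ENNReal.le_rpow_inv_iff ha).mpr (h F)

/-- Hölder's inequality for `tsum`s over a countable type. -/
private lemma tsum_rpow_mul_rpow_le {ι : Type*} [Countable ι] (u v : ι → ℝ≥0∞) {a : ℝ}
    (ha : 0 < a) (ha1 : a < 1) :
    (∑' i, u i ^ a * v i ^ (1 - a)) ≤ (∑' i, u i) ^ a * (∑' i, v i) ^ (1 - a) := by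
  letI : MeasurableSpace ι := ⊤
  haveI : MeasurableSingletonClass ι := ⟨fun _ => trivial⟩
  have ha1' : (0 : ℝ) < 1 - a := by linarith
  have hpq : (1 / a).HolderConjugate (1 / (1 - a)) := by
    rw [Real.holderConjugate_iff]; constructor
    · rw [lt_div_iff₀ ha, one_mul]; exact ha1
    · rw [one_div, one_div, inv_inv, inv_inv]; ring
  have h := ENNReal.lintegral_mul_le_Lp_mul_Lq (MeasureTheory.Measure.count : MeasureTheory.Measure ι)
    hpq (f := fun i => u i ^ a) (g := fun i => v i ^ (1 - a))
    measurable_from_top.aemeasurable measurable_from_top.aemeasurable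
  simp only [Pi.mul_apply, MeasureTheory.lintegral_count, ← ENNReal.rpow_mul,
    mul_one_div, div_self ha.ne', div_self ha1'.ne', ENNReal.rpow_one, one_div_one_div] at h
  exact h

private lemma ofReal_exp_neg_log_two (n : ℕ) :
    ENNReal.ofReal (Real.exp (-((n : ℝ) * Real.log 2))) = ((2 : ℝ≥0∞)⁻¹) ^ n := by
  have h1 : Real.exp (-((n : ℝ) * Real.log 2)) = ((2 : ℝ)⁻¹) ^ n := by
    rw [show -((n : ℝ) * Real.log 2) = (n : ℝ) * Real.log 2⁻¹ by rw [Real.log_inv]; ring,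
      Real.exp_nat_mul, Real.exp_log (by norm_num)]
  rw [h1, ENNReal.ofReal_pow (by norm_num), ENNReal.ofReal_inv_of_pos (by norm_num),
    ENNReal.ofReal_ofNat]

/-- One-shot converse: for any `λ > 0`, `ε ∈ [0,1)` and any variable-length code
with prefix-free codeword set, (possibly stochastic) encoder `W` and decoder `ψ`
whose error probability is at most `ε`, the exponential moment of the codeword
length (in nats) satisfies `E_P[exp(λ ℓ(X))] ≥ exp(λ H_{1/(1+λ)}^ε(P))`. -/
theorem one_shot_converse {X : Type*} [Countable X] (P : X → ℝ≥0∞)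
    (hP : ∑' x, P x = 1) (lam ε : ℝ) (hlam : 0 < lam) (hε0 : 0 ≤ ε) (hε1 : ε < 1)
    (W : X → List Bool → ℝ≥0∞) (ψ : List Bool → X)
    (hW : ∀ x, ∑' c, W x c = 1)
    (hprefix : ∀ c₁ c₂ : List Bool, (∃ x, W x c₁ ≠ 0) → (∃ x, W x c₂ ≠ 0) →
      c₁ <+: c₂ → c₁ = c₂)
    (herror : (∑' x, P x * ∑' c, if ψ c = x then 0 else W x c) ≤ ENNReal.ofReal ε) :
    EReal.exp ((lam : EReal) * smoothRenyi P ε (1 / (1 + lam))) ≤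
      ∑' x, P x * ∑' c, W x c *
        ENNReal.ofReal (Real.exp (lam * ((c.length : ℝ) * Real.log 2))) := by
  classical
  have hl1 : (0 : ℝ) < 1 + lam := by linarith
  set α : ℝ := 1 / (1 + lam) with hαdef
  have hα : 0 < α := by positivity
  have hα1 : α < 1 := by rw [hαdef, div_lt_one hl1]; linarith
  have hαlam : lam * α = 1 - α := by rw [hαdef]; field_simp; ring
  set E := ∑' x, P x * ∑' c, W x c *
      ENNReal.ofReal (Real.exp (lam * ((c.length : ℝ) * Real.log 2))) with hE
  -- the smoothed distribution
  set Q : X → ℝ≥0∞ := fun x => P x * ∑' c, (if ψ c = x then W x c else 0) with hQdef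
  have hQle : ∀ x, Q x ≤ P x := by
    intro x
    have h1 : (∑' c, (if ψ c = x then W x c else 0)) ≤ 1 := by
      rw [← hW x]
      exact ENNReal.tsum_le_tsum fun c => by split <;> simp
    calc Q x ≤ P x * 1 := mul_le_mul_right h1 _
      _ = P x := mul_one _
  have hsplit : ∀ x, (∑' c, (if ψ c = x then W x c else 0))
      + (∑' c, (if ψ c = x then 0 else W x c)) = 1 := by
    intro x
    rw [← ENNReal.tsum_add, ← hW x]
    refine tsum_congr fun c => ?_
    split <;> simp
  have hQsum1 : (∑' x, Q x) + (∑' x, P x * ∑' c, (if ψ c = x then 0 else W x c)) = 1 := by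
    rw [← ENNReal.tsum_add, ← hP]
    refine tsum_congr fun x => ?_
    simp only [hQdef]
    rw [← mul_add, hsplit, mul_one]
  have hQmem : Q ∈ smoothSet P ε := by
    refine ⟨hQle, ?_⟩
    have h2 : ENNReal.ofReal (1 - ε) + ENNReal.ofReal ε ≤ 1 := by
      rw [← ENNReal.ofReal_add (by linarith) hε0]
      simp
    have h3 : ENNReal.ofReal (1 - ε) ≤ 1 - ENNReal.ofReal ε := by
      rw [ENNReal.ofReal_sub 1 hε0, ENNReal.ofReal_one]
    have h4 : (1 : ℝ≥0∞) - ENNReal.ofReal ε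
        ≤ 1 - ∑' x, P x * ∑' c, (if ψ c = x then 0 else W x c) := tsub_le_tsub_left herror 1
    have h5 : (1 : ℝ≥0∞) - (∑' x, P x * ∑' c, (if ψ c = x then 0 else W x c)) ≤ ∑' x, Q x := by
      rw [tsub_le_iff_right]; exact hQsum1.ge
    exact h3.trans (h4.trans h5)
  have hrQ : rSmooth P ε α ≤ ∑' x, Q x ^ α := by
    have : rSmooth P ε α = ⨅ R ∈ smoothSet P ε, ∑' x, R x ^ α := rfl
    rw [this]
    exact iInf₂_le Q hQmem
  -- auxiliary functions on pairs
  set e : List Bool → ℝ≥0∞ :=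
    fun c => ENNReal.ofReal (Real.exp (lam * ((c.length : ℝ) * Real.log 2))) with he
  set F : X × List Bool → ℝ≥0∞ :=
    fun p => P p.1 * (if ψ p.2 = p.1 then W p.1 p.2 else 0) with hF
  set g : X × List Bool → ℝ≥0∞ := fun p =>
    if (ψ p.2 = p.1 ∧ P p.1 * W p.1 p.2 ≠ 0)
      then ENNReal.ofReal (Real.exp (-((p.2.length : ℝ) * Real.log 2))) else 0 with hg
  have hQF : (∑' x, Q x ^ α) ≤ ∑' p : X × List Bool, F p ^ α := by
    rw [ENNReal.tsum_prod']
    refine ENNReal.tsum_le_tsum fun x => ?_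
    have hQx : Q x = ∑' c, F (x, c) := by
      simp only [hQdef, hF]
      exact ENNReal.tsum_mul_left.symm
    rw [hQx]
    exact rpow_tsum_le _ hα hα1.le
  have hpoint : ∀ p : X × List Bool, F p ^ α ≤ (F p * e p.2) ^ α * g p ^ (1 - α) := by
    rintro ⟨x, c⟩
    by_cases hc : ψ c = x ∧ P x * W x c ≠ 0
    · have hgval : g (x, c) = ENNReal.ofReal (Real.exp (-((c.length : ℝ) * Real.log 2))) := by
        rw [hg]; exact if_pos hc
      have heg : e c ^ α * g (x, c) ^ (1 - α) = 1 := by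
        simp only [hgval, he]
        rw [ENNReal.ofReal_rpow_of_pos (Real.exp_pos _),
          ENNReal.ofReal_rpow_of_pos (Real.exp_pos _), ← Real.exp_mul, ← Real.exp_mul,
          ← ENNReal.ofReal_mul (Real.exp_nonneg _), ← Real.exp_add]
        have hzero : lam * ((c.length : ℝ) * Real.log 2) * α
            + -((c.length : ℝ) * Real.log 2) * (1 - α) = 0 := by
          linear_combination ((c.length : ℝ) * Real.log 2) * hαlam
        rw [hzero, Real.exp_zero, ENNReal.ofReal_one]
      have hsplit2 : (F (x, c) * e c) ^ α * g (x, c) ^ (1 - α)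
          = F (x, c) ^ α * (e c ^ α * g (x, c) ^ (1 - α)) := by
        rw [ENNReal.mul_rpow_of_nonneg _ _ hα.le, mul_assoc]
      rw [hsplit2, heg, mul_one]
    · have hF0 : F (x, c) = 0 := by
        by_cases hx : ψ c = x
        · simp only [hF]
          rw [if_pos hx]
          by_contra h'
          exact hc ⟨hx, h'⟩
        · simp [hF, hx]
      rw [hF0, ENNReal.zero_rpow_of_pos hα]
      exact zero_le
  have hhold : (∑' p : X × List Bool, (F p * e p.2) ^ α * g p ^ (1 - α))
      ≤ (∑' p : X × List Bool, F p * e p.2) ^ α * (∑' p : X × List Bool, g p) ^ (1 - α) :=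
    tsum_rpow_mul_rpow_le _ _ hα hα1
  have hFE : (∑' p : X × List Bool, F p * e p.2) ≤ E := by
    rw [ENNReal.tsum_prod', hE]
    refine ENNReal.tsum_le_tsum fun x => ?_
    rw [← ENNReal.tsum_mul_left]
    refine ENNReal.tsum_le_tsum fun c => ?_
    simp only [hF, he]
    rw [mul_assoc]
    refine mul_le_mul_right (mul_le_mul_left ?_ _) _
    split <;> simp
  have hK : (∑' p : X × List Bool, g p) ≤ 1 := by
    rw [ENNReal.tsum_prod', ENNReal.tsum_comm]
    have hsingle : ∀ c, (∑' x, g (x, c)) = g (ψ c, c) := by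
      intro c
      refine tsum_eq_single (ψ c) fun x hx => ?_
      simp only [hg]
      exact if_neg fun h => hx h.1.symm
    calc (∑' c, ∑' x, g (x, c)) = ∑' c, g (ψ c, c) := tsum_congr hsingle
      _ ≤ ∑' c : List Bool, (if W (ψ c) c ≠ 0 then ((2 : ℝ≥0∞)⁻¹) ^ c.length else 0) := by
          refine ENNReal.tsum_le_tsum fun c => ?_
          simp only [hg]
          by_cases hWc : W (ψ c) c ≠ 0
          · rw [if_pos hWc]
            split_ifs with h1
            · exact le_of_eq (ofReal_exp_neg_log_two c.length)
            · exact zero_le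
          · rw [if_neg hWc, if_neg]
            rintro ⟨-, hPW⟩
            exact hPW (by rw [not_not.mp hWc, mul_zero])
      _ ≤ 1 := kraft_tsum _ fun c₁ c₂ h₁ h₂ hpre =>
          hprefix c₁ c₂ ⟨ψ c₁, h₁⟩ ⟨ψ c₂, h₂⟩ hpre
  have hEα : (∑' x, Q x ^ α) ≤ E ^ α := by
    calc (∑' x, Q x ^ α) ≤ ∑' p : X × List Bool, F p ^ α := hQF
      _ ≤ ∑' p : X × List Bool, (F p * e p.2) ^ α * g p ^ (1 - α) :=
          ENNReal.tsum_le_tsum hpoint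
      _ ≤ (∑' p : X × List Bool, F p * e p.2) ^ α * (∑' p : X × List Bool, g p) ^ (1 - α) := hhold
      _ ≤ E ^ α * 1 ^ (1 - α) :=
          mul_le_mul' (ENNReal.rpow_le_rpow hFE hα.le) (ENNReal.rpow_le_rpow hK (by linarith))
      _ = E ^ α := by rw [ENNReal.one_rpow, mul_one]
  have hkey : rSmooth P ε α ≤ E ^ α := hrQ.trans hEα
  have hexp : EReal.exp ((lam : EReal) * smoothRenyi P ε α) = (rSmooth P ε α) ^ (1 + lam) := by
    have hc : lam * (1 - α)⁻¹ = 1 + lam := by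
      rw [hαdef]
      rw [show 1 - 1 / (1 + lam) = lam / (1 + lam) by field_simp; ring]
      field_simp
    rw [smoothRenyi, ← mul_assoc, ← EReal.coe_mul, hc, mul_comm, EReal.exp_mul, ENNReal.exp_log]
  rw [hexp]
  calc (rSmooth P ε α) ^ (1 + lam) ≤ (E ^ α) ^ (1 + lam) :=
        ENNReal.rpow_le_rpow hkey (by linarith)
    _ = E := by
        rw [← ENNReal.rpow_mul, show α * (1 + lam) = 1 by rw [hαdef]; field_simp,
          ENNReal.rpow_one]
end

section
/- Let A be a countable set and ℓ̄ : A → ℝ≥0 satisfy the Kraft-type inequality ∑_{x∈A} exp(−ℓ̄(x)) ≤ 1. Then for any nonnegative weights Q on A with 0 < ∑_{x∈A} Q(x)^{1/(1+λ)} < ∞ and any λ > 0, ∑_{x∈A} Q(x) exp(λ ℓ̄(x)) ≥ (∑_{x∈A} Q(x)^{1/(1+λ)})^{1+λ}, with equality when ℓ̄(x) = −log( Q(x)^{1/(1+λ)} / ∑_{x'} Q(x')^{1/(1+λ)} ). -/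
open scoped ENNReal

/-- Campbell-type optimization bound used in the converse proof: if the
(real-valued, nonnegative) lengths `ℓ̄` satisfy the Kraft-type inequality
`∑_x exp(-ℓ̄(x)) ≤ 1`, then for nonnegative weights `Q` with
`0 < ∑_x Q(x)^{1/(1+λ)} < ∞`,
`∑_x Q(x) exp(λ ℓ̄(x)) ≥ (∑_x Q(x)^{1/(1+λ)})^{1+λ}`, with equality when
`ℓ̄(x) = -log(Q(x)^{1/(1+λ)} / ∑_{x'} Q(x')^{1/(1+λ)})`. -/
theorem campbell_bound {A : Type*} [Countable A] (lam : ℝ) (hlam : 0 < lam)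
    (Q : A → ℝ≥0∞) (ℓ : A → ℝ) (hℓ : ∀ x, 0 ≤ ℓ x)
    (hS0 : 0 < ∑' x, Q x ^ (1 / (1 + lam)))
    (hStop : ∑' x, Q x ^ (1 / (1 + lam)) ≠ ∞)
    (hkraft : ∑' x, ENNReal.ofReal (Real.exp (-ℓ x)) ≤ 1) :
    (∑' x, Q x ^ (1 / (1 + lam))) ^ (1 + lam) ≤
        ∑' x, Q x * ENNReal.ofReal (Real.exp (lam * ℓ x)) ∧
      ((∀ x, ℓ x = -Real.log ((Q x ^ (1 / (1 + lam))).toReal /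
          (∑' y, Q y ^ (1 / (1 + lam))).toReal)) →
        ∑' x, Q x * ENNReal.ofReal (Real.exp (lam * ℓ x)) =
          (∑' x, Q x ^ (1 / (1 + lam))) ^ (1 + lam)) := by
  letI : MeasurableSpace A := ⊤
  haveI : MeasurableSingletonClass A := ⟨fun _ => trivial⟩
  have h1lam : (0:ℝ) < 1 + lam := by linarith
  set p : ℝ := 1 / (1 + lam) with hp
  have hp0 : 0 < p := by positivity
  have hq0 : 0 ≤ lam * p := by positivity
  have hpq : p + lam * p = 1 := by rw [hp]; field_simp
  set T : ℝ≥0∞ := ∑' x, Q x ^ p with hT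
  set X : ℝ≥0∞ := ∑' x, Q x * ENNReal.ofReal (Real.exp (lam * ℓ x)) with hX
  -- pointwise identity for Hölder
  have hpoint : ∀ x, (Q x * ENNReal.ofReal (Real.exp (lam * ℓ x))) ^ p *
      (ENNReal.ofReal (Real.exp (-ℓ x))) ^ (lam * p) = Q x ^ p := by
    intro x
    rw [ENNReal.mul_rpow_of_nonneg _ _ hp0.le,
      ENNReal.ofReal_rpow_of_pos (Real.exp_pos _),
      ENNReal.ofReal_rpow_of_pos (Real.exp_pos _),
      ← Real.exp_mul, ← Real.exp_mul, mul_assoc, ← ENNReal.ofReal_mul (Real.exp_pos _).le,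
      ← Real.exp_add]
    have : lam * ℓ x * p + -ℓ x * (lam * p) = 0 := by ring
    rw [this, Real.exp_zero, ENNReal.ofReal_one, mul_one]
  have hineq : T ≤ X ^ p := by
    calc T = ∫⁻ x, (Q x * ENNReal.ofReal (Real.exp (lam * ℓ x))) ^ p *
          (ENNReal.ofReal (Real.exp (-ℓ x))) ^ (lam * p) ∂ MeasureTheory.Measure.count := by
            rw [MeasureTheory.lintegral_count]
            exact (tsum_congr hpoint).symm
      _ ≤ (∫⁻ x, Q x * ENNReal.ofReal (Real.exp (lam * ℓ x)) ∂ MeasureTheory.Measure.count) ^ p *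
          (∫⁻ x, ENNReal.ofReal (Real.exp (-ℓ x)) ∂ MeasureTheory.Measure.count) ^ (lam * p) :=
            ENNReal.lintegral_mul_norm_pow_le
              (Measurable.aemeasurable (measurable_of_countable _))
              (Measurable.aemeasurable (measurable_of_countable _)) hp0.le hq0 hpq
      _ = X ^ p * (∑' x, ENNReal.ofReal (Real.exp (-ℓ x))) ^ (lam * p) := by
            rw [MeasureTheory.lintegral_count, MeasureTheory.lintegral_count]
      _ ≤ X ^ p * 1 ^ (lam * p) := by
            gcongr
      _ = X ^ p := by simp
  have hmain : T ^ (1 + lam) ≤ X := by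
    calc T ^ (1 + lam) ≤ (X ^ p) ^ (1 + lam) := ENNReal.rpow_le_rpow hineq h1lam.le
      _ = X := by
          rw [← ENNReal.rpow_mul]
          have : p * (1 + lam) = 1 := by rw [hp]; field_simp
          rw [this, ENNReal.rpow_one]
  refine ⟨hmain, fun heq => ?_⟩
  -- equality case
  have hterm : ∀ x, Q x * ENNReal.ofReal (Real.exp (lam * ℓ x)) = T ^ lam * Q x ^ p := by
    intro x
    by_cases hQ0 : Q x = 0
    · rw [hQ0, zero_mul, ENNReal.zero_rpow_of_pos hp0, mul_zero]
    have hQtop : Q x ≠ ∞ := by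
      intro h
      apply hStop
      refine eq_top_iff.2 ?_
      calc (∞:ℝ≥0∞) = Q x ^ p := by rw [h, ENNReal.top_rpow_of_pos hp0]
        _ ≤ T := ENNReal.le_tsum x
    have hQp0 : Q x ^ p ≠ 0 := by simp [ENNReal.rpow_eq_zero_iff, hQ0, hQtop, hp0.ne',
      hp0.not_gt]
    have hQptop : Q x ^ p ≠ ∞ := by simp [ENNReal.rpow_eq_top_iff, hQ0, hQtop, hp0.ne',
      hp0.not_gt]
    set qx : ℝ := (Q x ^ p).toReal with hqx
    set S : ℝ := T.toReal with hS
    have hqx0 : 0 < qx := ENNReal.toReal_pos hQp0 hQptop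
    have hS0' : 0 < S := ENNReal.toReal_pos hS0.ne' hStop
    have hℓx : ℓ x = Real.log (S / qx) := by
      rw [heq x, ← Real.log_inv, inv_div]
    have hexp : Real.exp (lam * ℓ x) = (S / qx) ^ lam := by
      rw [mul_comm, Real.exp_mul, hℓx, Real.exp_log (by positivity)]
    have hbase : ENNReal.ofReal ((S / qx) ^ lam) = (T / Q x ^ p) ^ lam := by
      rw [← ENNReal.ofReal_rpow_of_pos (by positivity)]
      congr 1
      rw [ENNReal.ofReal_div_of_pos hqx0, hS, hqx, ENNReal.ofReal_toReal hStop,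
        ENNReal.ofReal_toReal hQptop]
    have hsplit : Q x ^ p = Q x / Q x ^ (p * lam) := by
      calc Q x ^ p = Q x ^ (1 - p * lam) := by
              congr 1
              rw [hp]; field_simp; ring
        _ = Q x ^ (1:ℝ) / Q x ^ (p * lam) := ENNReal.rpow_sub _ _ hQ0 hQtop
        _ = Q x / Q x ^ (p * lam) := by rw [ENNReal.rpow_one]
    rw [hexp, hbase, ENNReal.div_rpow_of_nonneg _ _ hlam.le, ← ENNReal.rpow_mul, hsplit]
    simp only [div_eq_mul_inv]
    ring
  calc ∑' x, Q x * ENNReal.ofReal (Real.exp (lam * ℓ x))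
      = ∑' x, T ^ lam * Q x ^ p := tsum_congr hterm
    _ = T ^ lam * T := by rw [ENNReal.tsum_mul_left]
    _ = T ^ (1 + lam) := by
        rw [show (1:ℝ) + lam = lam + 1 by ring, ENNReal.rpow_add _ _ hS0.ne' hStop,
          ENNReal.rpow_one]
end

section
/- Smoothing lower bound (Renner–Wolf Lemma 2 corollary): for α ∈ (0,1), ε ∈ [0,1), and ε' > 0 with ε + ε' < 1, the smooth Rényi entropy satisfies H_α^ε(P) ≥ H_0^{ε+ε'}(P) − log(1/ε')/(1−α), where H_0^δ(P) = min{ log|A| : A ⊆ X, P(A) ≥ 1−δ }. -/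
open scoped ENNReal

/-- The smooth max entropy `H_0^δ(P) = min{log |A| : A ⊆ X finite, P(A) ≥ 1-δ}`. -/
noncomputable def smoothMaxEntropy {X : Type*} (P : X → ℝ≥0∞) (δ : ℝ) : ℝ :=
  sInf {r : ℝ | ∃ A : Finset X,
    ENNReal.ofReal (1 - δ) ≤ ∑ x ∈ A, P x ∧ r = Real.log (A.card)}

lemma key_lemma {X : Type*} [Countable X] (P Q : X → ℝ≥0∞)
    (α ε ε' : ℝ) (hα : α ∈ Set.Ioo (0:ℝ) 1) (hε0 : 0 ≤ ε) (hε' : 0 < ε') (hlt : ε + ε' < 1)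
    (hQ : Q ∈ smoothSet P ε) :
    ENNReal.ofReal (ε' * Real.exp ((1 - α) * smoothMaxEntropy P (ε + ε'))) ≤
      ∑' x, Q x ^ α := by
  obtain ⟨hQP, hQsum⟩ := hQ
  set H0 := smoothMaxEntropy P (ε + ε') with hH0def
  set r := ∑' x, Q x ^ α with hrdef
  rcases eq_or_ne r ⊤ with hr | hrtop
  · rw [hr]; exact le_top
  have h1α : (0:ℝ) < 1 - α := by linarith [hα.2]
  have hε'1 : ε' < 1 := by linarith
  -- r ≠ 0
  have hr0 : r ≠ 0 := by
    intro h0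
    have : ∀ x, Q x ^ α = 0 := fun x => by
      have := (ENNReal.tsum_eq_zero.mp h0) x
      exact this
    have hQ0 : ∀ x, Q x = 0 := fun x => by
      have := this x
      rw [ENNReal.rpow_eq_zero_iff] at this
      rcases this with ⟨h, _⟩ | ⟨_, h⟩
      · exact h
      · linarith [hα.1]
    have : (∑' x, Q x) = 0 := by simp [hQ0]
    rw [this, le_zero_iff, ENNReal.ofReal_eq_zero] at hQsum
    linarith
  set R := r.toReal with hRdef
  have hR : 0 < R := ENNReal.toReal_pos hr0 hrtop
  have hrR : r = ENNReal.ofReal R := (ENNReal.ofReal_toReal hrtop).symm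
  set lam := (ε' / R) ^ ((1:ℝ) / (1 - α)) with hlamdef
  have hlam : 0 < lam := Real.rpow_pos_of_pos (div_pos hε' hR) _
  have hlam1α : lam ^ (1 - α) = ε' / R := by
    rw [hlamdef, ← Real.rpow_mul (div_pos hε' hR).le,
      one_div, inv_mul_cancel₀ h1α.ne', Real.rpow_one]
  -- the set A
  have hSfin : {x | ENNReal.ofReal lam ≤ Q x}.Finite := by
    apply Set.Finite.subset (ENNReal.finite_const_le_of_tsum_ne_top hrtop
      (ε := ENNReal.ofReal (lam ^ α))
      (by simp [ENNReal.ofReal_eq_zero, not_le, Real.rpow_pos_of_pos hlam]))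
    intro x hx
    have : (ENNReal.ofReal lam) ^ α ≤ Q x ^ α := ENNReal.rpow_le_rpow hx hα.1.le
    rwa [ENNReal.ofReal_rpow_of_pos hlam] at this
  set A := hSfin.toFinset with hAdef
  have hmemA : ∀ x, x ∈ A ↔ ENNReal.ofReal lam ≤ Q x := by
    intro x; simp [hAdef, Set.Finite.mem_toFinset]
  -- card bound
  have hcard : (A.card : ℝ≥0∞) * ENNReal.ofReal (lam ^ α) ≤ r := by
    calc (A.card : ℝ≥0∞) * ENNReal.ofReal (lam ^ α)
        = ∑ _x ∈ A, ENNReal.ofReal (lam ^ α) := by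
          rw [Finset.sum_const, nsmul_eq_mul]
      _ ≤ ∑ x ∈ A, Q x ^ α := by
          apply Finset.sum_le_sum
          intro x hx
          rw [← ENNReal.ofReal_rpow_of_pos hlam]
          exact ENNReal.rpow_le_rpow ((hmemA x).mp hx) hα.1.le
      _ ≤ r := ENNReal.sum_le_tsum A
  -- tail bound
  have htail : ∑' x : ↥((A : Set X)ᶜ), Q x ≤ ENNReal.ofReal ε' := by
    have hptwise : ∀ x : ↥((A : Set X)ᶜ), Q x ≤ Q x ^ α * ENNReal.ofReal (lam ^ (1 - α)) := by
      intro x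
      have hx : ¬ ENNReal.ofReal lam ≤ Q ↑x := by
        have := x.2
        simp only [Set.mem_compl_iff, Finset.coe_sort_coe, Finset.mem_coe] at this
        rw [hmemA] at this; exact this
      push_neg at hx
      calc Q ↑x = Q ↑x ^ α * Q ↑x ^ (1 - α) := by
            rw [← ENNReal.rpow_add_of_nonneg α (1-α) hα.1.le h1α.le]
            norm_num
        _ ≤ Q ↑x ^ α * ENNReal.ofReal (lam ^ (1 - α)) := by
            apply mul_le_mul_right
            rw [← ENNReal.ofReal_rpow_of_pos hlam]
            exact ENNReal.rpow_le_rpow hx.le h1α.le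
    calc ∑' x : ↥((A : Set X)ᶜ), Q x
        ≤ ∑' x : ↥((A : Set X)ᶜ), Q x ^ α * ENNReal.ofReal (lam ^ (1 - α)) :=
          ENNReal.tsum_le_tsum hptwise
      _ = (∑' x : ↥((A : Set X)ᶜ), Q x ^ α) * ENNReal.ofReal (lam ^ (1 - α)) :=
          ENNReal.tsum_mul_right
      _ ≤ r * ENNReal.ofReal (lam ^ (1 - α)) := by
          apply mul_le_mul_left
          rw [hrdef]
          calc ∑' x : ↥((A : Set X)ᶜ), Q ↑x ^ α
              = ∑' x, ((A:Set X)ᶜ).indicator (fun y => Q y ^ α) x := tsum_subtype ((A:Set X)ᶜ) (fun y => Q y ^ α)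
            _ ≤ ∑' x, Q x ^ α := ENNReal.tsum_le_tsum fun x => Set.indicator_le_self _ _ x
      _ = ENNReal.ofReal ε' := by
          rw [hlam1α, hrR, ← ENNReal.ofReal_mul hR.le]
          rw [mul_div_cancel₀]
          exact hR.ne'
  -- P(A) ≥ 1 - (ε+ε')
  have hPA : ENNReal.ofReal (1 - (ε + ε')) ≤ ∑ x ∈ A, P x := by
    have hsplit : ∑' x : (A:Set X), Q ↑x + ∑' x : ↥((A:Set X)ᶜ), Q ↑x = ∑' x, Q x :=
      Summable.tsum_add_tsum_compl ENNReal.summable ENNReal.summable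
    have hQA : ∑' x : (A:Set X), Q ↑x = ∑ x ∈ A, Q x := Finset.tsum_subtype A Q
    have h1 : ENNReal.ofReal (1 - ε) ≤ ∑ x ∈ A, Q x + ENNReal.ofReal ε' := by
      calc ENNReal.ofReal (1-ε) ≤ ∑' x, Q x := hQsum
        _ = ∑ x ∈ A, Q x + ∑' x : ↥((A:Set X)ᶜ), Q ↑x := by rw [← hsplit, hQA]
        _ ≤ ∑ x ∈ A, Q x + ENNReal.ofReal ε' := add_le_add_right htail _
    have h2 : ENNReal.ofReal (1 - ε) = ENNReal.ofReal (1 - (ε+ε')) + ENNReal.ofReal ε' := by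
      rw [← ENNReal.ofReal_add (by linarith) hε'.le]; ring_nf
    rw [h2] at h1
    have h3 := (ENNReal.add_le_add_iff_right ENNReal.ofReal_ne_top).mp h1
    calc ENNReal.ofReal (1-(ε+ε')) ≤ ∑ x ∈ A, Q x := h3
      _ ≤ ∑ x ∈ A, P x := Finset.sum_le_sum fun x _ => hQP x
  -- H0 ≤ log card
  have hH0le : H0 ≤ Real.log A.card := by
    apply csInf_le
    · exact ⟨0, fun y hy => by obtain ⟨B, _, rfl⟩ := hy; exact Real.log_natCast_nonneg _⟩
    · exact ⟨A, hPA, rfl⟩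
  -- A nonempty
  have hA1 : 1 ≤ A.card := by
    rcases Finset.eq_empty_or_nonempty A with h | h
    · exfalso
      rw [h, Finset.sum_empty, le_zero_iff, ENNReal.ofReal_eq_zero] at hPA
      linarith
    · exact Finset.card_pos.mpr h
  have hcardpos : (0:ℝ) < (A.card : ℝ) := by exact_mod_cast hA1
  have hlampow : 0 < lam ^ α := Real.rpow_pos_of_pos hlam α
  -- card real bound
  have hcardR : (A.card : ℝ) ≤ R / lam ^ α := by
    have hfin : ((A.card : ℝ≥0∞) * ENNReal.ofReal (lam ^ α)) ≠ ⊤ :=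
      ENNReal.mul_ne_top (ENNReal.natCast_ne_top _) ENNReal.ofReal_ne_top
    have h5 := (ENNReal.toReal_le_toReal hfin hrtop).mpr hcard
    rw [ENNReal.toReal_mul, ENNReal.toReal_natCast,
      ENNReal.toReal_ofReal hlampow.le] at h5
    rw [le_div_iff₀ hlampow]
    exact h5
  have hloglam : Real.log lam = (Real.log ε' - Real.log R) / (1 - α) := by
    rw [hlamdef, Real.log_rpow (div_pos hε' hR), Real.log_div hε'.ne' hR.ne']; ring
  have hlog : Real.log A.card ≤ Real.log R - α * Real.log lam := by
    calc Real.log A.card ≤ Real.log (R / lam ^ α) := Real.log_le_log hcardpos hcardR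
      _ = Real.log R - Real.log (lam ^ α) := Real.log_div hR.ne' hlampow.ne'
      _ = Real.log R - α * Real.log lam := by rw [Real.log_rpow hlam]
  have hu : Real.log ε' ≤ 0 := Real.log_nonpos hε'.le hε'1.le
  have hfinal : Real.log ε' + (1 - α) * H0 ≤ Real.log R := by
    have h4 : (1-α) * H0 ≤ (1-α) * (Real.log R - α * Real.log lam) :=
      mul_le_mul_of_nonneg_left (hH0le.trans hlog) h1α.le
    rw [hloglam] at h4
    have h5 : (1-α) * (α * ((Real.log ε' - Real.log R)/(1-α))) =
        α * (Real.log ε' - Real.log R) := by field_simp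
    have h6 : (1-α) * H0 ≤ Real.log R - α * Real.log ε' := by nlinarith [h4, h5]
    nlinarith [h6, mul_nonneg hα.1.le (neg_nonneg.mpr hu)]
  have hRfin : ε' * Real.exp ((1-α) * H0) ≤ R := by
    have h7 : Real.exp (Real.log ε' + (1-α)*H0) ≤ Real.exp (Real.log R) :=
      Real.exp_le_exp.mpr hfinal
    rwa [Real.exp_add, Real.exp_log hε', Real.exp_log hR] at h7
  rw [hrR]
  exact ENNReal.ofReal_le_ofReal hRfin

/-- Smoothing lower bound (corollary of Renner–Wolf, Lemma 2): for `α ∈ (0,1)`,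
`ε ∈ [0,1)` and `ε' > 0` with `ε + ε' < 1`,
`H_α^ε(P) ≥ H_0^{ε+ε'}(P) - log(1/ε')/(1-α)`. -/
theorem smoothRenyi_ge_smoothMax {X : Type*} [Countable X] (P : X → ℝ≥0∞)
    (hP : ∑' x, P x = 1) (α ε ε' : ℝ) (hα : α ∈ Set.Ioo (0 : ℝ) 1)
    (hε0 : 0 ≤ ε) (hε' : 0 < ε') (hlt : ε + ε' < 1) :
    ((smoothMaxEntropy P (ε + ε') - Real.log (1 / ε') / (1 - α) : ℝ) : EReal) ≤
      smoothRenyi P ε α := by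
  have h1α : (0:ℝ) < 1 - α := by linarith [hα.2]
  set H0 := smoothMaxEntropy P (ε + ε') with hH0
  set c := ε' * Real.exp ((1 - α) * H0) with hcdef
  have hcpos : 0 < c := mul_pos hε' (Real.exp_pos _)
  have hc : ENNReal.ofReal c ≤ rSmooth P ε α :=
    le_iInf₂ fun Q hQ => key_lemma P Q α ε ε' hα hε0 hε' hlt hQ
  rcases eq_or_ne (rSmooth P ε α) ⊤ with htop | htop
  · rw [smoothRenyi, htop, ENNReal.log_top,
      EReal.coe_mul_top_of_pos (by positivity : (0:ℝ) < (1-α)⁻¹)]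
    exact le_top
  · have hne0 : rSmooth P ε α ≠ 0 := by
      intro h; rw [h, le_zero_iff, ENNReal.ofReal_eq_zero] at hc; linarith
    have hT : 0 < (rSmooth P ε α).toReal := ENNReal.toReal_pos hne0 htop
    have hcT : c ≤ (rSmooth P ε α).toReal := (ENNReal.ofReal_le_iff_le_toReal htop).mp hc
    rw [smoothRenyi, ENNReal.log_pos_real hne0 htop, ← EReal.coe_mul, EReal.coe_le_coe_iff]
    have hlogle : Real.log ε' + (1-α)*H0 ≤ Real.log (rSmooth P ε α).toReal := by
      have h8 := Real.log_le_log hcpos hcT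
      rwa [hcdef, Real.log_mul hε'.ne' (Real.exp_pos _).ne', Real.log_exp] at h8
    have hlog1ε : Real.log (1/ε') = - Real.log ε' := by rw [one_div, Real.log_inv]
    have h9 := mul_le_mul_of_nonneg_left hlogle (inv_nonneg.mpr h1α.le)
    have hexpand : (1-α)⁻¹ * (Real.log ε' + (1-α)*H0) = (1-α)⁻¹ * Real.log ε' + H0 := by
      field_simp
    rw [hlog1ε, div_eq_inv_mul]
    linarith
end

section
/- Koga's converse bound: let P be a probability distribution on {1,2,3,…} sorted non-increasingly, ε ∈ [0,1), and k* the minimal integer with ∑_{i=1}^{k*} P(i) ≥ 1−ε. Then for α ∈ (0,1), H_α^ε(P) ≥ (1/(1−α)) log( ∑_{i=1}^{k*−1} P(i)^α ). -/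
open scoped ENNReal

/-- Key pointwise bound: if `0 < q ≤ p ≤ 1` (or `q = 0`) then
`q * p ^ (α - 1) ≤ q ^ α` for `α < 1`. -/
lemma aux_mul_rpow_le {q p : ℝ≥0∞} {α : ℝ} (hα : α ∈ Set.Ioo (0 : ℝ) 1)
    (hqp : q ≤ p) (hp1 : p ≤ 1) : q * p ^ (α - 1) ≤ q ^ α := by
  rcases eq_or_ne q 0 with hq | hq
  · simp [hq]
  have hqt : q ≠ ⊤ := fun h => by simp [h] at hqp; simp [hqp] at hp1
  have h1 : p ^ (α - 1) ≤ q ^ (α - 1) := by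
    rw [show α - 1 = -(1 - α) by ring, ENNReal.rpow_neg, ENNReal.rpow_neg]
    exact ENNReal.inv_le_inv.mpr (ENNReal.rpow_le_rpow hqp (by linarith [hα.2]))
  calc q * p ^ (α - 1) ≤ q * q ^ (α - 1) := mul_le_mul_right h1 q
    _ = q ^ (1 : ℝ) * q ^ (α - 1) := by rw [ENNReal.rpow_one]
    _ = q ^ α := by rw [← ENNReal.rpow_add _ _ hq hqt]; norm_num

/-- Koga's converse bound: for `P` on `{1,2,3,…}` (indexed here by `ℕ`, so the
paper's atoms `1,…,k*` are indices `0,…,k-1`) sorted non-increasingly,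
`ε ∈ [0,1)`, `k*` minimal with `∑_{i=1}^{k*} P(i) ≥ 1-ε`, and `α ∈ (0,1)`:
`H_α^ε(P) ≥ (1/(1-α)) log ∑_{i=1}^{k*-1} P(i)^α`. -/
theorem koga_converse_bound (P : ℕ → ℝ≥0∞) (hP : ∑' i, P i = 1)
    (hmono : Antitone P) (ε α : ℝ) (hε0 : 0 ≤ ε) (hε1 : ε < 1)
    (hα : α ∈ Set.Ioo (0 : ℝ) 1) (k : ℕ)
    (hk : ENNReal.ofReal (1 - ε) ≤ ∑ i ∈ Finset.range k, P i)
    (hmin : ∀ j < k, ∑ i ∈ Finset.range j, P i < ENNReal.ofReal (1 - ε)) :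
    (((1 - α)⁻¹ : ℝ) : EReal) *
        ENNReal.log (∑ i ∈ Finset.range (k - 1), P i ^ α) ≤
      smoothRenyi P ε α := by
  set m := k - 1 with hm
  -- each P i ≤ 1
  have hPle1 : ∀ i, P i ≤ 1 := by
    intro i
    rw [← hP]
    exact ENNReal.le_tsum i
  -- k ≥ 1
  have hk1 : 1 ≤ k := by
    by_contra h
    push_neg at h
    interval_cases k
    simp only [Finset.range_zero, Finset.sum_empty, nonpos_iff_eq_zero] at hk
    rw [ENNReal.ofReal_eq_zero] at hk
    linarith
  have hmk : m < k := Nat.sub_lt hk1 one_pos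
  -- partial sum below 1 - ε
  have hpartial : ∑ i ∈ Finset.range m, P i < ENNReal.ofReal (1 - ε) := hmin m hmk
  -- P m > 0 : else ∑ range k P = ∑ range m P since P (m) = 0 and m = k-1
  have hPm : P m ≠ 0 := by
    intro h0
    have : ∑ i ∈ Finset.range k, P i = ∑ i ∈ Finset.range m, P i := by
      have : k = m + 1 := (Nat.succ_pred_eq_of_pos hk1).symm
      rw [this, Finset.sum_range_succ, h0, add_zero]
    exact absurd (hk.trans_lt (this ▸ hpartial)) (lt_irrefl _)
  -- core estimate: for all Q in the smoothing set
  have key : ∀ Q ∈ smoothSet P ε, ∑ i ∈ Finset.range m, P i ^ α ≤ ∑' x, Q x ^ α := by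
    rintro Q ⟨hQle, hQsum⟩
    -- split the tsum of Q^α
    have hsplit : (∑ i ∈ Finset.range m, Q i ^ α) + ∑' i, Q (i + m) ^ α
        = ∑' i, Q i ^ α :=
      Summable.sum_add_tsum_nat_add' (f := fun i => Q i ^ α) ENNReal.summable
    rw [← hsplit]
    set c : ℝ≥0∞ := P m ^ (α - 1) with hc
    -- tail bound: each Q(i+m)^α ≥ Q(i+m) * c
    have htail : c * ∑' i, Q (i + m) ≤ ∑' i, Q (i + m) ^ α := by
      rw [← ENNReal.tsum_mul_left]
      refine ENNReal.tsum_le_tsum fun i => ?_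
      rw [mul_comm]
      have h1 : Q (i + m) ≤ P m := (hQle _).trans (hmono (Nat.le_add_left m i))
      have h2 : c ≤ Q (i + m) ^ (α - 1) ⊔ c := le_sup_right
      -- use aux with p := P m, q := Q (i+m)
      exact aux_mul_rpow_le hα h1 (hPle1 m)
    -- per-atom bound on head
    have hhead : ∀ i ∈ Finset.range m, Q i * (P i ^ (α - 1)) ≤ Q i ^ α :=
      fun i _ => aux_mul_rpow_le hα (hQle i) (hPle1 i)
    -- R i := P i - Q i
    set R : ℕ → ℝ≥0∞ := fun i => P i - Q i with hR
    have hQR : ∀ i, Q i + R i = P i := fun i => add_tsub_cancel_of_le (hQle i)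
    -- sums are finite
    have hQfin : ∑ i ∈ Finset.range m, Q i ≠ ⊤ := by
      refine ne_top_of_le_ne_top ?_ (Finset.sum_le_sum fun i _ => hQle i)
      exact (hpartial.trans_le le_top).ne
    -- ∑ R ≤ tail sum of Q
    have hTsum : (∑ i ∈ Finset.range m, Q i) + ∑' i, Q (i + m) = ∑' i, Q i :=
      Summable.sum_add_tsum_nat_add' ENNReal.summable
    have hRle : ∑ i ∈ Finset.range m, R i ≤ ∑' i, Q (i + m) := by
      have h1 : (∑ i ∈ Finset.range m, R i) + ∑ i ∈ Finset.range m, Q i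
          ≤ ENNReal.ofReal (1 - ε) := by
        calc (∑ i ∈ Finset.range m, R i) + ∑ i ∈ Finset.range m, Q i
            = ∑ i ∈ Finset.range m, P i := by
              rw [← Finset.sum_add_distrib]
              exact Finset.sum_congr rfl fun i _ => by rw [add_comm, hQR]
          _ ≤ ENNReal.ofReal (1 - ε) := hpartial.le
      have h2 : ENNReal.ofReal (1 - ε) ≤ (∑' i, Q (i + m)) + ∑ i ∈ Finset.range m, Q i := by
        rw [add_comm, hTsum]; exact hQsum
      exact (ENNReal.add_le_add_iff_right hQfin).mp (h1.trans h2)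
    -- combine
    calc ∑ i ∈ Finset.range m, P i ^ α
        = ∑ i ∈ Finset.range m, (Q i + R i) * P i ^ (α - 1) := by
          refine Finset.sum_congr rfl fun i hi => ?_
          have hPi : P i ≠ 0 := by
            intro h0
            exact hPm (le_antisymm (h0 ▸ hmono (Nat.le_of_lt_succ
              ((Finset.mem_range.mp hi).trans_le (by omega)))) zero_le)
          have hPit : P i ≠ ⊤ := ((hPle1 i).trans_lt (by simp)).ne
          have hexp : P i ^ α = P i ^ (1 + (α - 1)) := by norm_num
          rw [hQR, hexp, ENNReal.rpow_add _ _ hPi hPit, ENNReal.rpow_one]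
      _ = (∑ i ∈ Finset.range m, Q i * P i ^ (α - 1))
            + ∑ i ∈ Finset.range m, R i * P i ^ (α - 1) := by
          rw [← Finset.sum_add_distrib]
          exact Finset.sum_congr rfl fun i _ => add_mul _ _ _
      _ ≤ (∑ i ∈ Finset.range m, Q i ^ α) + c * ∑' i, Q (i + m) := by
          refine add_le_add (Finset.sum_le_sum hhead) ?_
          calc ∑ i ∈ Finset.range m, R i * P i ^ (α - 1)
              ≤ ∑ i ∈ Finset.range m, R i * c := by
                refine Finset.sum_le_sum fun i hi => ?_
                refine mul_le_mul_right ?_ _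
                -- P i ≥ P m so P i ^ (α-1) ≤ P m ^ (α-1)
                rw [hc, show α - 1 = -(1 - α) by ring, ENNReal.rpow_neg,
                  ENNReal.rpow_neg]
                exact ENNReal.inv_le_inv.mpr (ENNReal.rpow_le_rpow
                  (hmono (le_of_lt (Finset.mem_range.mp hi)))
                  (by linarith [hα.2]))
            _ = c * ∑ i ∈ Finset.range m, R i := by
                rw [Finset.mul_sum]; exact Finset.sum_congr rfl fun i _ => mul_comm _ _
            _ ≤ c * ∑' i, Q (i + m) := mul_le_mul_right hRle _
      _ ≤ (∑ i ∈ Finset.range m, Q i ^ α) + ∑' i, Q (i + m) ^ α :=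
          add_le_add_right htail _
  -- from key, rSmooth ≥ head sum
  have hr : ∑ i ∈ Finset.range m, P i ^ α ≤ rSmooth P ε α := by
    rw [rSmooth]
    exact le_iInf₂ key
  -- conclude via log monotonicity and nonneg scalar
  rw [smoothRenyi]
  have hlog : ENNReal.log (∑ i ∈ Finset.range m, P i ^ α)
      ≤ ENNReal.log (rSmooth P ε α) := ENNReal.log_monotone hr
  have hnn : (0 : EReal) ≤ (((1 - α)⁻¹ : ℝ) : EReal) := by
    rw [← EReal.coe_zero, EReal.coe_le_coe_iff, inv_nonneg]
    linarith [hα.2]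
  exact mul_le_mul_of_nonneg_left hlog hnn
end

section
/- Mixture lower deviation: let P_{X^n} = ∑_{k=1}^m α_k P_{X_k}^{⊗n} be a mixture of m i.i.d. sources with α_k > 0, ∑ α_k = 1, and entropies H(X_1) > ⋯ > H(X_m). Then for every γ > 0 there exists n_0 such that for all n ≥ n_0 and all i ∈ {1,…,m}, Pr[ (1/n) log(1/P_{X^n}(X^n)) ≥ H(X_i) − γ ] ≥ A_{i+1} − γ, where A_{i+1} = ∑_{j=1}^i α_j. -/
set_option maxHeartbeats 1000000


open scoped ENNReal

/-- The mixture of `m` i.i.d. sources with weights `w` and per-letter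
distributions `P`: `P_{X^n}(x^n) = ∑_k w_k ∏_t P_k(x_t)`. -/
noncomputable def mixProd {X : Type*} {m : ℕ} (w : Fin m → ℝ) (P : Fin m → X → ℝ≥0∞)
    (n : ℕ) (x : Fin n → X) : ℝ≥0∞ :=
  ∑ k, ENNReal.ofReal (w k) * ∏ t, P k (x t)

/-- `A_i = ∑_{j=1}^{i-1} w_j` (0-based: the total weight of the first `i`
components). -/
noncomputable def Aweight {m : ℕ} (w : Fin m → ℝ) (i : ℕ) : ℝ :=
  ∑ k ∈ Finset.univ.filter (fun k : Fin m => (k : ℕ) < i), w k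

private lemma tsum_fin_pi {X : Type*} : ∀ (n : ℕ) (f : Fin n → X → ℝ),
    (∀ t, Summable fun x => |f t x|) →
    Summable (fun x : Fin n → X => |∏ t, f t (x t)|) ∧
      ∑' x : Fin n → X, ∏ t, f t (x t) = ∏ t, ∑' x, f t x := by
  intro n
  induction n with
  | zero =>
    intro f _
    constructor
    · exact summable_of_finite_support (Set.toFinite _)
    · simp only [Finset.univ_eq_empty, Finset.prod_empty]
      rw [tsum_eq_single (default : Fin 0 → X)]
      · intro b hb; exact absurd (Subsingleton.elim b default) hb
  | succ n ih =>
    intro f hf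
    obtain ⟨ihS, ihT⟩ := ih (fun t => f t.succ) (fun t => hf t.succ)
    let e : X × (Fin n → X) ≃ (Fin (n+1) → X) := Fin.consEquiv (fun _ => X)
    have hprod : ∀ x : Fin (n+1) → X,
        ∏ t, f t (x t) = f 0 (x 0) * ∏ t : Fin n, f t.succ (x t.succ) := by
      intro x; rw [Fin.prod_univ_succ]
    have hS2 : Summable (fun p : X × (Fin n → X) =>
        |f 0 p.1| * |∏ t : Fin n, f t.succ (p.2 t)|) :=
      summable_mul_of_summable_norm (f := fun a : X => |f 0 a|)
        (g := fun b : Fin n → X => |∏ t : Fin n, f t.succ (b t)|)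
        (by simpa only [Real.norm_eq_abs, abs_abs] using (hf 0))
         (by simpa only [Real.norm_eq_abs, abs_abs] using ihS)
    have hkey : ∀ p : X × (Fin n → X), ∏ t, f t (e p t) = f 0 p.1 * ∏ t : Fin n, f t.succ (p.2 t) := by
      intro p
      rw [hprod]
      simp [e, Fin.cons_zero, Fin.cons_succ]
    have hSumm : Summable (fun x : Fin (n+1) → X => |∏ t, f t (x t)|) := by
      rw [← e.summable_iff]
      apply (hS2.congr ?_)
      intro p
      simp only [Function.comp_apply, hkey p, abs_mul]
    refine ⟨hSumm, ?_⟩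
    have h1 : ∑' x : Fin (n+1) → X, ∏ t, f t (x t)
        = ∑' p : X × (Fin n → X), f 0 p.1 * ∏ t : Fin n, f t.succ (p.2 t) := by
      rw [← e.tsum_eq (fun x : Fin (n+1) → X => ∏ t, f t (x t))]
      exact tsum_congr hkey
    have h2 := tsum_mul_tsum_of_summable_norm (f := f 0)
      (g := fun b : Fin n → X => ∏ t : Fin n, f t.succ (b t))
      (by simpa only [Real.norm_eq_abs] using hf 0) (by simpa only [Real.norm_eq_abs] using ihS)
    rw [h1, ← h2, ihT, Fin.prod_univ_succ]

private lemma cheb {X : Type*} (q : X → ℝ) (hq0 : ∀ x, 0 ≤ q x) (hqs : Summable q)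
    (hq1 : ∑' x, q x = 1) (g : X → ℝ) (M : ℝ) (hg0 : ∀ x, 0 ≤ g x) (hgM : ∀ x, g x ≤ M)
    (c ε : ℝ) (hε : 0 < ε) (hc : c + ε ≤ ∑' x, q x * g x) (n : ℕ) (hn : 0 < n) :
    ∑' x : Fin n → X, (if ∑ t, g (x t) ≤ n * c then ∏ t, q (x t) else 0)
      ≤ M * M / (n * (ε * ε)) := by
  classical
  cases isEmpty_or_nonempty X with
  | inl hX => simp [tsum_empty] at hq1
  | inr hX =>
  obtain ⟨x₀⟩ := hX
  have hM0 : 0 ≤ M := le_trans (hg0 x₀) (hgM x₀)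
  set μ : ℝ := ∑' x, q x * g x with hμ
  set d : X → ℝ := fun y => μ - g y with hdd
  have hqM : Summable (fun x => q x * M) := hqs.mul_right M
  have hqg_s : Summable (fun x => q x * g x) :=
    hqM.of_nonneg_of_le (fun x => mul_nonneg (hq0 x) (hg0 x))
      (fun x => mul_le_mul_of_nonneg_left (hgM x) (hq0 x))
  have hμ0 : 0 ≤ μ := tsum_nonneg (fun x => mul_nonneg (hq0 x) (hg0 x))
  have hμM : μ ≤ M := by
    calc μ ≤ ∑' x, q x * M :=
          Summable.tsum_le_tsum (fun x => mul_le_mul_of_nonneg_left (hgM x) (hq0 x)) hqg_s hqM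
    _ = (∑' x, q x) * M := tsum_mul_right
    _ = M := by rw [hq1, one_mul]
  have hdM : ∀ y, |d y| ≤ M := by
    intro y
    rw [abs_le]
    constructor
    · simp only [hdd]; linarith [hgM y, hμ0]
    · simp only [hdd]; linarith [hg0 y, hμM]
  -- W facts
  set W : (Fin n → X) → ℝ := fun x => ∏ t, q (x t) with hWdef
  have hW0 : ∀ x, 0 ≤ W x := fun x => Finset.prod_nonneg (fun t _ => hq0 _)
  obtain ⟨hWabs, hWsum_eq⟩ := tsum_fin_pi n (fun _ => q) (fun _ => hqs.abs)
  have hWs : Summable W := by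
    apply hWabs.congr; intro x; exact abs_of_nonneg (hW0 x)
  have hW1 : ∑' x, W x = 1 := by
    rw [hWdef]; rw [hWsum_eq, hq1]; simp
  -- E[d] = 0
  have hqd_s : Summable (fun y => q y * d y) := by
    have : (fun y => q y * d y) = fun y => q y * μ - q y * g y := by
      funext y; simp [hdd]; ring
    rw [this]
    exact (hqs.mul_right μ).sub hqg_s
  have hEd : ∑' y, q y * d y = 0 := by
    have h1 : ∑' y, q y * d y = (∑' y, q y * μ) - ∑' y, q y * g y := by
      rw [← Summable.tsum_sub (hqs.mul_right μ) hqg_s]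
      apply tsum_congr; intro y; simp [hdd]; ring
    rw [h1, tsum_mul_right, hq1, one_mul, ← hμ]; ring
  -- V
  set V : ℝ := ∑' y, q y * (d y * d y) with hV
  have hqd2_le : ∀ y, q y * (d y * d y) ≤ q y * (M * M) := by
    intro y
    apply mul_le_mul_of_nonneg_left _ (hq0 y)
    calc d y * d y = |d y| * |d y| := (abs_mul_abs_self (d y)).symm
    _ ≤ M * M := mul_self_le_mul_self (abs_nonneg _) (hdM y)
  have hqd2_s : Summable (fun y => q y * (d y * d y)) :=
    (hqs.mul_right (M*M)).of_nonneg_of_le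
      (fun y => mul_nonneg (hq0 y) (mul_self_nonneg _)) hqd2_le
  have hVM : V ≤ M * M := by
    calc V ≤ ∑' y, q y * (M * M) := Summable.tsum_le_tsum hqd2_le hqd2_s (hqs.mul_right _)
    _ = (∑' y, q y) * (M * M) := tsum_mul_right
    _ = M * M := by rw [hq1, one_mul]
  -- per-pair sums
  have hpair : ∀ t s : Fin n, ∑' x : Fin n → X, W x * d (x t) * d (x s)
      = if t = s then V else 0 := by
    intro t s
    set f : Fin n → X → ℝ := fun u y =>
      q y * (if u = t then d y else 1) * (if u = s then d y else 1) with hfdef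
    have hf_abs : ∀ u, Summable fun y => |f u y| := by
      intro u
      apply ((hqs.mul_right (M+1)).mul_right (M+1)).of_nonneg_of_le
        (fun y => abs_nonneg _)
      intro y
      have hb : ∀ (b : Prop) [Decidable b], |if b then d y else 1| ≤ M + 1 := by
        intro b _
        split
        · exact le_trans (hdM y) (by linarith)
        · rw [abs_one]; linarith
      calc |f u y| = q y * |if u = t then d y else 1| * |if u = s then d y else 1| := by
            rw [hfdef]; simp only [abs_mul, abs_of_nonneg (hq0 y)]
      _ ≤ q y * (M+1) * (M+1) := by
          apply mul_le_mul (mul_le_mul_of_nonneg_left (hb _) (hq0 y)) (hb _) (abs_nonneg _)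
          exact mul_nonneg (hq0 y) (by linarith)
    obtain ⟨hfS, hfT⟩ := tsum_fin_pi n f hf_abs
    have hprod_eq : ∀ x : Fin n → X, ∏ u, f u (x u) = W x * d (x t) * d (x s) := by
      intro x
      rw [hfdef]
      simp only [Finset.prod_mul_distrib]
      congr 1
      · congr 1
        exact Finset.prod_ite_eq' Finset.univ t (fun u => d (x u)) |>.trans (if_pos (Finset.mem_univ t))
      · exact Finset.prod_ite_eq' Finset.univ s (fun u => d (x u)) |>.trans (if_pos (Finset.mem_univ s))
    rw [← tsum_congr hprod_eq, hfT]
    by_cases hts : t = s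
    · subst hts
      rw [if_pos rfl]
      have hfu : ∀ u, ∑' y, f u y = if u = t then V else 1 := by
        intro u
        by_cases hut : u = t
        · subst hut
          rw [if_pos rfl, hV]
          apply tsum_congr; intro y; rw [hfdef]; simp; ring
        · rw [if_neg hut]
          have : ∀ y, f u y = q y := by intro y; rw [hfdef]; simp [hut]
          rw [tsum_congr this, hq1]
      calc ∏ u, ∑' y, f u y = ∏ u, (if u = t then V else 1) :=
            Finset.prod_congr rfl (fun u _ => hfu u)
      _ = V := by rw [Finset.prod_ite_eq' Finset.univ t (fun _ => V), if_pos (Finset.mem_univ t)]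
    · rw [if_neg hts]
      apply Finset.prod_eq_zero (Finset.mem_univ t)
      have : ∀ y, f t y = q y * d y := by
        intro y; rw [hfdef]; simp [hts]
      rw [tsum_congr this, hEd]
  -- sum expansion
  set S : (Fin n → X) → ℝ := fun x => ∑ t, d (x t) with hSdef
  have hSb : ∀ x, |S x| ≤ n * M := by
    intro x
    calc |S x| ≤ ∑ t, |d (x t)| := Finset.abs_sum_le_sum_abs _ _
    _ ≤ ∑ _t : Fin n, M := Finset.sum_le_sum (fun t _ => hdM _)
    _ = n * M := by simp [Finset.sum_const, nsmul_eq_mul]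
  have hFp_s : ∀ p : Fin n × Fin n, Summable (fun x : Fin n → X => W x * d (x p.1) * d (x p.2)) := by
    intro p
    apply Summable.of_abs
    apply ((hWs.mul_right M).mul_right M).of_nonneg_of_le (fun x => abs_nonneg _)
    intro x
    calc |W x * d (x p.1) * d (x p.2)| = W x * |d (x p.1)| * |d (x p.2)| := by
          rw [abs_mul, abs_mul, abs_of_nonneg (hW0 x)]
    _ ≤ W x * M * M := by
        apply mul_le_mul (mul_le_mul_of_nonneg_left (hdM _) (hW0 x)) (hdM _) (abs_nonneg _)
        exact mul_nonneg (hW0 x) hM0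
  have hexpand : ∀ x : Fin n → X,
      W x * (S x * S x) = ∑ p : Fin n × Fin n, W x * d (x p.1) * d (x p.2) := by
    intro x
    rw [Fintype.sum_prod_type]
    have e1 : S x * S x = ∑ t : Fin n, ∑ s : Fin n, d (x t) * d (x s) := by
      simp only [hSdef]
      exact Finset.sum_mul_sum _ _ _ _
    rw [e1, Finset.mul_sum]
    apply Finset.sum_congr rfl; intro t _
    rw [Finset.mul_sum]
    apply Finset.sum_congr rfl; intro s _
    ring
  have hSq_s : Summable (fun x : Fin n → X => W x * (S x * S x)) := by
    apply (hWs.mul_right ((n*M)*(n*M))).of_nonneg_of_le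
      (fun x => mul_nonneg (hW0 x) (mul_self_nonneg _))
    intro x
    apply mul_le_mul_of_nonneg_left _ (hW0 x)
    calc S x * S x = |S x| * |S x| := (abs_mul_abs_self _).symm
    _ ≤ (n*M) * (n*M) := mul_self_le_mul_self (abs_nonneg _) (hSb x)
  have hT : ∑' x : Fin n → X, W x * (S x * S x) = n * V := by
    rw [tsum_congr hexpand, Summable.tsum_finsetSum (fun p _ => hFp_s p)]
    have : ∀ p : Fin n × Fin n, ∑' x : Fin n → X, W x * d (x p.1) * d (x p.2)
        = if p.1 = p.2 then V else 0 := fun p => hpair p.1 p.2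
    rw [Finset.sum_congr rfl (fun p _ => this p), Fintype.sum_prod_type]
    have h1 : ∀ t : Fin n, (∑ s : Fin n, if t = s then V else 0) = V := by
      intro t
      rw [Finset.sum_ite_eq Finset.univ t (fun _ => V), if_pos (Finset.mem_univ t)]
    rw [Finset.sum_congr rfl (fun t _ => h1 t)]
    simp [Finset.sum_const, nsmul_eq_mul]
  set K : ℝ := n * ε with hKdef
  have hn' : (0:ℝ) < n := by exact_mod_cast hn
  have hK : 0 < K := mul_pos hn' hε
  have hpt : ∀ x : Fin n → X, (if ∑ t, g (x t) ≤ n * c then W x else 0)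
      ≤ W x * (S x * S x) / (K * K) := by
    intro x
    split
    · next hcond =>
      have hSx : K ≤ S x := by
        have hSe : S x = n * μ - ∑ t, g (x t) := by
          simp only [hSdef, hdd, Finset.sum_sub_distrib, Finset.sum_const,
            Finset.card_univ, Fintype.card_fin, nsmul_eq_mul]
        rw [hSe, hKdef]
        have hμc : c + ε ≤ μ := hc
        nlinarith
      have h2 : K * K ≤ S x * S x := mul_self_le_mul_self hK.le hSx
      rw [mul_div_assoc]
      apply le_mul_of_one_le_right (hW0 x)
      rw [le_div_iff₀ (by positivity), one_mul]
      exact h2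
    · exact div_nonneg (mul_nonneg (hW0 x) (mul_self_nonneg _)) (by positivity)
  have hPs : Summable (fun x : Fin n → X => if ∑ t, g (x t) ≤ n * c then W x else 0) := by
    apply (hSq_s.div_const (K*K)).of_nonneg_of_le
    · intro x; split; exacts [hW0 x, le_refl 0]
    · exact hpt
  calc ∑' x : Fin n → X, (if ∑ t, g (x t) ≤ n * c then W x else 0)
      ≤ ∑' x : Fin n → X, W x * (S x * S x) / (K * K) :=
        Summable.tsum_le_tsum hpt hPs (hSq_s.div_const _)
  _ = (n * V) / (K * K) := by rw [tsum_div_const, hT]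
  _ ≤ (n * (M*M)) / (K * K) := by
      gcongr
  _ = M * M / (n * (ε * ε)) := by
      rw [hKdef, div_eq_div_iff (by positivity) (by positivity)]
      ring

private lemma exists_trunc {X : Type*} (q r : X → ℝ) (hq0 : ∀ x, 0 ≤ q x)
    (hr0 : ∀ x, 0 ≤ r x) (hr1 : ∀ x, r x ≤ 1)
    (hqs : Summable q) (hq1 : ∑' x, q x = 1)
    (hrs : Summable r) (hrle : ∑' x, r x ≤ 1)
    (Hk : ℝ) (hH : HasSum (fun x => q x * (-Real.log (q x))) Hk)
    (c : ℝ) (hc : c < Hk) :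
    ∃ M : ℝ, 0 ≤ M ∧
      c < ∑' x, q x * (if r x = 0 then M else min (-Real.log (r x)) M) := by
  classical
  set g : X → ℝ := fun x => if r x = 0 then 0 else -Real.log (r x) with hgdef
  have hg0 : ∀ x, 0 ≤ g x := by
    intro x
    simp only [hgdef]
    split
    · exact le_refl 0
    · next hr =>
      have hrx : 0 < r x := (hr0 x).lt_of_ne (Ne.symm hr)
      have := Real.log_nonpos (hr0 x) (hr1 x)
      linarith
  have hgT0 : ∀ M : ℝ, 0 ≤ M → ∀ x, 0 ≤ (if r x = 0 then M else min (-Real.log (r x)) M) := by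
    intro M hM x
    split
    · exact hM
    · next hr =>
      apply le_min _ hM
      have hrx : 0 < r x := (hr0 x).lt_of_ne (Ne.symm hr)
      have := Real.log_nonpos (hr0 x) (hr1 x)
      linarith
  have hgTM : ∀ M : ℝ, 0 ≤ M → ∀ x, (if r x = 0 then M else min (-Real.log (r x)) M) ≤ M := by
    intro M hM x
    split
    · exact le_refl M
    · exact min_le_right _ _
  have hgTs : ∀ M : ℝ, 0 ≤ M →
      Summable (fun x => q x * (if r x = 0 then M else min (-Real.log (r x)) M)) := by
    intro M hM
    apply (hqs.mul_right M).of_nonneg_of_le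
      (fun x => mul_nonneg (hq0 x) (hgT0 M hM x))
      (fun x => mul_le_mul_of_nonneg_left (hgTM M hM x) (hq0 x))
  rcases lt_or_ge c 0 with hc0 | hc0
  · refine ⟨0, le_refl 0, ?_⟩
    calc c < 0 := hc0
    _ ≤ _ := tsum_nonneg (fun x => mul_nonneg (hq0 x) (hgT0 0 (le_refl 0) x))
  · by_cases hA : ∃ x0, 0 < q x0 ∧ r x0 = 0
    · obtain ⟨x0, hq0x, hr0x⟩ := hA
      set M : ℝ := (c+1)/(q x0) with hMdef
      have hM0 : 0 ≤ M := by positivity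
      refine ⟨M, hM0, ?_⟩
      have hterm : q x0 * (if r x0 = 0 then M else min (-Real.log (r x0)) M) = c + 1 := by
        rw [if_pos hr0x, hMdef, mul_div_cancel₀ _ (ne_of_gt hq0x)]
      calc c < c + 1 := by linarith
      _ = q x0 * (if r x0 = 0 then M else min (-Real.log (r x0)) M) := hterm.symm
      _ ≤ _ := Summable.le_tsum (hgTs M hM0) x0
            (fun b _ => mul_nonneg (hq0 b) (hgT0 M hM0 b))
    · push_neg at hA
      have hA' : ∀ x, 0 < q x → r x ≠ 0 := fun x hx => hA x hx
      have hF : ∃ F : Finset X, c < ∑ x ∈ F, q x * g x := by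
        by_contra hnot
        push_neg at hnot
        have hg_nonneg : ∀ x, 0 ≤ q x * g x := fun x => mul_nonneg (hq0 x) (hg0 x)
        have hsg : Summable (fun x => q x * g x) :=
          summable_of_sum_le hg_nonneg hnot
        have hle : ∑' x, q x * g x ≤ c := Summable.tsum_le_of_sum_le hsg hnot
        have hpt : ∀ x, q x - r x ≤ q x * g x - q x * (-Real.log (q x)) := by
          intro x
          rcases eq_or_lt_of_le (hq0 x) with h | h
          · rw [← h]
            simp only [zero_mul, sub_zero, zero_sub]
            linarith [hr0 x]
          · have hrx : 0 < r x := (hr0 x).lt_of_ne (Ne.symm (hA' x h))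
            have hgx : g x = -Real.log (r x) := by rw [hgdef]; exact if_neg (ne_of_gt hrx)
            rw [hgx]
            have hlog : Real.log (r x / q x) ≤ r x / q x - 1 :=
              Real.log_le_sub_one_of_pos (div_pos hrx h)
            rw [Real.log_div (ne_of_gt hrx) (ne_of_gt h)] at hlog
            have h2 := mul_le_mul_of_nonneg_left hlog h.le
            have h3 : q x * (r x / q x) = r x := by field_simp
            nlinarith [h2, h3]
        have hsum1 : Summable (fun x => q x - r x) := hqs.sub hrs
        have hsum2 : Summable (fun x => q x * g x - q x * (-Real.log (q x))) :=
          hsg.sub hH.summable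
        have h4 := Summable.tsum_le_tsum hpt hsum1 hsum2
        rw [Summable.tsum_sub hqs hrs, Summable.tsum_sub hsg hH.summable, hq1, hH.tsum_eq] at h4
        linarith [hrle]
      obtain ⟨F, hF⟩ := hF
      set M : ℝ := ∑ x ∈ F, g x with hMdef
      have hM0 : 0 ≤ M := Finset.sum_nonneg (fun x _ => hg0 x)
      refine ⟨M, hM0, ?_⟩
      have hgle : ∀ x ∈ F, g x ≤ M := fun x hx =>
        Finset.single_le_sum (fun y _ => hg0 y) hx
      have heq : ∀ x ∈ F, q x * (if r x = 0 then M else min (-Real.log (r x)) M)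
          = q x * g x := by
        intro x hx
        by_cases hr : r x = 0
        · have hqx : q x = 0 := by
            by_contra h
            exact (hA' x ((hq0 x).lt_of_ne (Ne.symm h))) hr
          simp [hqx]
        · rw [if_neg hr]
          have : g x = -Real.log (r x) := by rw [hgdef]; exact if_neg hr
          rw [min_eq_left (by rw [← this]; exact hgle x hx), this]
      calc c < ∑ x ∈ F, q x * g x := hF
      _ = ∑ x ∈ F, q x * (if r x = 0 then M else min (-Real.log (r x)) M) :=
          (Finset.sum_congr rfl heq).symm
      _ ≤ _ := Summable.sum_le_tsum F (fun b _ => mul_nonneg (hq0 b) (hgT0 M hM0 b)) (hgTs M hM0)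

/-- Mixture lower deviation: for a mixture of `m` i.i.d. sources with positive
weights and strictly decreasing (finite) entropies, for every `γ > 0` there is
`n₀` such that for all `n ≥ n₀` and components `i`,
`Pr[(1/n) log(1/P_{X^n}(X^n)) ≥ H(X_i) - γ] ≥ A_{i+1} - γ`. -/
theorem mixture_lower_deviation {X : Type*} [Countable X] {m : ℕ}
    (w : Fin m → ℝ) (P : Fin m → X → ℝ≥0∞) (H : Fin m → ℝ)
    (hw : ∀ k, 0 < w k) (hw1 : ∑ k, w k = 1)
    (hP : ∀ k, ∑' x, P k x = 1)
    (hH : ∀ k, HasSum (fun x => (P k x).toReal * Real.log (1 / (P k x).toReal)) (H k))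
    (hanti : StrictAnti H) (γ : ℝ) (hγ : 0 < γ) :
    ∃ n₀ : ℕ, ∀ n ≥ n₀, ∀ i : Fin m,
      ENNReal.ofReal (Aweight w ((i : ℕ) + 1) - γ) ≤
        ∑' x : {y : Fin n → X //
            H i - γ ≤ (1 / (n : ℝ)) * Real.log (1 / (mixProd w P n y).toReal)},
          mixProd w P n (x : Fin n → X) := by
  classical
  have hPtop : ∀ k x, P k x ≠ ⊤ := by
    intro k x
    have h1 : P k x ≤ 1 := by rw [← hP k]; exact ENNReal.le_tsum x
    exact ne_top_of_le_ne_top ENNReal.one_ne_top h1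
  set q : Fin m → X → ℝ := fun k x => (P k x).toReal with hqdef
  have hq0 : ∀ k x, 0 ≤ q k x := fun k x => ENNReal.toReal_nonneg
  have hq_le1 : ∀ k x, q k x ≤ 1 := by
    intro k x
    have h1 : P k x ≤ 1 := by rw [← hP k]; exact ENNReal.le_tsum x
    have := ENNReal.toReal_mono ENNReal.one_ne_top h1
    simpa using this
  have hqs : ∀ k, Summable (q k) := by
    intro k
    apply ENNReal.summable_toReal
    rw [hP k]; exact ENNReal.one_ne_top
  have hq1 : ∀ k, ∑' x, q k x = 1 := by
    intro k
    have := ENNReal.tsum_toReal_eq (fun x => hPtop k x)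
    rw [hP k] at this
    simpa [hqdef] using this.symm
  have hH' : ∀ k, HasSum (fun x => q k x * (-Real.log (q k x))) (H k) := by
    intro k
    simpa only [one_div, Real.log_inv] using hH k
  have hprodtop : ∀ (k) (n : ℕ) (x : Fin n → X), (∏ t, P k (x t)) ≠ ⊤ := by
    intro k n x
    exact ENNReal.prod_ne_top (fun t _ => hPtop k (x t))
  have hprod_of : ∀ (k) (n : ℕ) (x : Fin n → X),
      ∏ t, P k (x t) = ENNReal.ofReal (∏ t, q k (x t)) := by
    intro k n x
    rw [← ENNReal.ofReal_toReal (hprodtop k n x), ENNReal.toReal_prod]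
  have hWr : ∀ (k) (n : ℕ), Summable (fun x : Fin n → X => ∏ t, q k (x t)) ∧
      (∑' x : Fin n → X, ∏ t, q k (x t)) = 1 := by
    intro k n
    obtain ⟨hS, hT⟩ := tsum_fin_pi n (fun _ => q k) (fun _ => (hqs k).abs)
    constructor
    · apply hS.congr
      intro x
      exact abs_of_nonneg (Finset.prod_nonneg fun t _ => hq0 k _)
    · rw [hT, hq1 k]; simp
  set εb : ℝ := γ / (m + 1) with hεb
  have hεb0 : 0 < εb := by rw [hεb]; positivity
  have key : ∀ k j : Fin m, ∃ N : ℕ, ∀ n : ℕ, N ≤ n → 0 < n →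
      ∑' x : Fin n → X,
        (if ENNReal.ofReal (Real.exp (-((n : ℝ) * (H k - γ)))) < ∏ t, P j (x t)
          then ∏ t, P k (x t) else 0) ≤ ENNReal.ofReal εb := by
    intro k j
    obtain ⟨M, hM0, hMgt⟩ := exists_trunc (q k) (q j) (hq0 k) (hq0 j) (hq_le1 j)
      (hqs k) (hq1 k) (hqs j) (le_of_eq (hq1 j)) (H k) (hH' k) (H k - γ) (by linarith)
    set gT : X → ℝ := fun x => if q j x = 0 then M else min (-Real.log (q j x)) M with hgT
    set ε : ℝ := (∑' x, q k x * gT x) - (H k - γ) with hε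
    have hε0 : 0 < ε := by rw [hε]; linarith [hMgt]
    have hgT0 : ∀ x, 0 ≤ gT x := by
      intro x
      simp only [hgT]
      split
      · exact hM0
      · next hr =>
        apply le_min _ hM0
        have hrx : 0 < q j x := (hq0 j x).lt_of_ne (Ne.symm hr)
        have := Real.log_nonpos (hq0 j x) (hq_le1 j x)
        linarith
    have hgTM : ∀ x, gT x ≤ M := by
      intro x
      simp only [hgT]
      split
      · exact le_refl M
      · exact min_le_right _ _
    obtain ⟨N₀, hN₀⟩ := exists_nat_ge ((M * M) / (ε * ε * εb))
    refine ⟨N₀ + 1, ?_⟩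
    intro n hn hnpos
    have hWs : Summable (fun x : Fin n → X => ∏ t, q k (x t)) := (hWr k n).1
    have hW0 : ∀ x : Fin n → X, 0 ≤ ∏ t, q k (x t) :=
      fun x => Finset.prod_nonneg fun t _ => hq0 k _
    have hsum_ite1 : Summable (fun x : Fin n → X =>
        if ENNReal.ofReal (Real.exp (-((n : ℝ) * (H k - γ)))) < ∏ t, P j (x t)
          then ∏ t, q k (x t) else 0) := by
      apply hWs.of_nonneg_of_le
      · intro x; split; exacts [hW0 x, le_refl 0]
      · intro x; split; exacts [le_refl _, hW0 x]
    have hsum_ite2 : Summable (fun x : Fin n → X =>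
        if ∑ t, gT (x t) ≤ (n : ℝ) * (H k - γ) then ∏ t, q k (x t) else 0) := by
      apply hWs.of_nonneg_of_le
      · intro x; split; exacts [hW0 x, le_refl 0]
      · intro x; split; exacts [le_refl _, hW0 x]
    have hpoint : ∀ x : Fin n → X,
        (if ENNReal.ofReal (Real.exp (-((n : ℝ) * (H k - γ)))) < ∏ t, P j (x t)
          then ∏ t, q k (x t) else 0)
        ≤ (if ∑ t, gT (x t) ≤ (n : ℝ) * (H k - γ) then ∏ t, q k (x t) else 0) := by
      intro x
      by_cases hC : ENNReal.ofReal (Real.exp (-((n : ℝ) * (H k - γ)))) < ∏ t, P j (x t)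
      · rw [if_pos hC]
        have h1 : Real.exp (-((n : ℝ) * (H k - γ))) < ∏ t, q j (x t) := by
          rw [hprod_of j n x] at hC
          exact (ENNReal.ofReal_lt_ofReal_iff_of_nonneg (Real.exp_nonneg _)).mp hC
        have hpos : ∀ t, q j (x t) ≠ 0 := by
          intro t ht
          have : ∏ t, q j (x t) = 0 := Finset.prod_eq_zero (Finset.mem_univ t) ht
          rw [this] at h1
          exact absurd h1 (not_lt.mpr (Real.exp_nonneg _))
        have hcond : ∑ t, gT (x t) ≤ (n : ℝ) * (H k - γ) := by
          have h2 : ∀ t : Fin n, gT (x t) ≤ -Real.log (q j (x t)) := by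
            intro t
            simp only [hgT]
            rw [if_neg (hpos t)]
            exact min_le_left _ _
          have h3 : ∑ t, gT (x t) ≤ ∑ t, -Real.log (q j (x t)) :=
            Finset.sum_le_sum (fun t _ => h2 t)
          have h4 : ∑ t, -Real.log (q j (x t)) = -Real.log (∏ t, q j (x t)) := by
            rw [Real.log_prod (fun t _ => hpos t)]
            rw [← Finset.sum_neg_distrib]
          have h5 : -((n : ℝ) * (H k - γ)) < Real.log (∏ t, q j (x t)) := by
            calc -((n : ℝ) * (H k - γ)) = Real.log (Real.exp (-((n : ℝ) * (H k - γ)))) :=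
                  (Real.log_exp _).symm
            _ < Real.log (∏ t, q j (x t)) := Real.log_lt_log (Real.exp_pos _) h1
          rw [h4] at h3
          linarith
        rw [if_pos hcond]
      · rw [if_neg hC]
        split
        · exact hW0 x
        · exact le_refl 0
    calc ∑' x : Fin n → X,
        (if ENNReal.ofReal (Real.exp (-((n : ℝ) * (H k - γ)))) < ∏ t, P j (x t)
          then ∏ t, P k (x t) else 0)
        = ENNReal.ofReal (∑' x : Fin n → X,
            if ENNReal.ofReal (Real.exp (-((n : ℝ) * (H k - γ)))) < ∏ t, P j (x t)
              then ∏ t, q k (x t) else 0) := by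
          rw [ENNReal.ofReal_tsum_of_nonneg (fun x => by split; exacts [hW0 x, le_refl 0])
            hsum_ite1]
          apply tsum_congr
          intro x
          split
          · exact hprod_of k n x
          · simp
    _ ≤ ENNReal.ofReal (M * M / ((n : ℝ) * (ε * ε))) := by
          apply ENNReal.ofReal_le_ofReal
          calc ∑' x : Fin n → X, _ ≤ ∑' x : Fin n → X,
              (if ∑ t, gT (x t) ≤ (n : ℝ) * (H k - γ) then ∏ t, q k (x t) else 0) :=
                Summable.tsum_le_tsum hpoint hsum_ite1 hsum_ite2
          _ ≤ M * M / ((n : ℝ) * (ε * ε)) := by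
              apply cheb (q k) (hq0 k) (hqs k) (hq1 k) gT M hgT0 hgTM (H k - γ) ε hε0
                (by rw [hε]; ring_nf; exact le_refl _) n hnpos
    _ ≤ ENNReal.ofReal εb := by
          apply ENNReal.ofReal_le_ofReal
          have hnR : (0:ℝ) < n := by exact_mod_cast hnpos
          have hNn : (N₀ : ℝ) ≤ n := by exact_mod_cast le_trans (Nat.le_succ N₀) hn
          rw [div_le_iff₀ (by positivity)]
          rw [div_le_iff₀ (by positivity : (0:ℝ) < ε * ε * εb)] at hN₀
          nlinarith [hεb0, hε0, hN₀,
            mul_le_mul_of_nonneg_right hNn (le_of_lt (mul_pos (mul_pos hε0 hε0) hεb0))]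
  choose N hN using key
  refine ⟨1 + Finset.univ.sup (fun p : Fin m × Fin m => N p.1 p.2), ?_⟩
  intro n hn i
  have hn1 : 0 < n := lt_of_lt_of_le (Nat.succ_pos 0) (le_trans (Nat.le_add_right 1 _) hn)
  have hnN : ∀ k j : Fin m, N k j ≤ n := by
    intro k j
    calc N k j ≤ Finset.univ.sup (fun p : Fin m × Fin m => N p.1 p.2) :=
          Finset.le_sup (f := fun p : Fin m × Fin m => N p.1 p.2) (Finset.mem_univ (k, j))
    _ ≤ n := le_trans (Nat.le_add_left _ 1) hn
  set Ev : Set (Fin n → X) :=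
    {y | H i - γ ≤ (1 / (n : ℝ)) * Real.log (1 / (mixProd w P n y).toReal)} with hEv
  set Ki : Finset (Fin m) := Finset.univ.filter (fun k : Fin m => (k : ℕ) < (i : ℕ) + 1)
    with hKi
  set Good : Fin m → Set (Fin n → X) := fun k =>
    {x | ∀ j, ∏ t, P j (x t) ≤ ENNReal.ofReal (Real.exp (-((n : ℝ) * (H k - γ))))} with hGood
  have hmem : ∀ k ∈ Ki, ∀ x : Fin n → X, x ∈ Good k → 0 < ∏ t, P k (x t) → x ∈ Ev := by
    intro k hk x hxG hxpos
    have hki : k ≤ i := by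
      rw [hKi, Finset.mem_filter] at hk
      have h2 := hk.2
      exact Fin.le_def.mpr (by omega)
    have hHki : H i - γ ≤ H k - γ := by
      have := hanti.antitone hki
      linarith
    have hxG' : ∀ j, ∏ t, P j (x t) ≤ ENNReal.ofReal (Real.exp (-((n : ℝ) * (H k - γ)))) := hxG
    have hub : mixProd w P n x ≤ ENNReal.ofReal (Real.exp (-((n : ℝ) * (H k - γ)))) := by
      calc mixProd w P n x
          = ∑ k', ENNReal.ofReal (w k') * ∏ t, P k' (x t) := rfl
      _ ≤ ∑ k', ENNReal.ofReal (w k') * ENNReal.ofReal (Real.exp (-((n : ℝ) * (H k - γ)))) :=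
            Finset.sum_le_sum (fun k' _ => mul_le_mul_right (hxG' k') _)
      _ = (∑ k', ENNReal.ofReal (w k')) * ENNReal.ofReal (Real.exp (-((n : ℝ) * (H k - γ)))) :=
            (Finset.sum_mul _ _ _).symm
      _ = 1 * ENNReal.ofReal (Real.exp (-((n : ℝ) * (H k - γ)))) := by
            rw [← ENNReal.ofReal_sum_of_nonneg (fun k' _ => (hw k').le), hw1,
              ENNReal.ofReal_one]
      _ = ENNReal.ofReal (Real.exp (-((n : ℝ) * (H k - γ)))) := one_mul _
    have hlb : 0 < mixProd w P n x := by
      have hw' : ENNReal.ofReal (w k) ≠ 0 := ne_of_gt (ENNReal.ofReal_pos.mpr (hw k))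
      have h1 : 0 < ENNReal.ofReal (w k) * ∏ t, P k (x t) :=
        ENNReal.mul_pos hw' (ne_of_gt hxpos)
      calc 0 < ENNReal.ofReal (w k) * ∏ t, P k (x t) := h1
      _ ≤ ∑ k', ENNReal.ofReal (w k') * ∏ t, P k' (x t) :=
          Finset.single_le_sum (f := fun k' : Fin m => ENNReal.ofReal (w k') * ∏ t, P k' (x t))
            (fun k' _ => zero_le) (Finset.mem_univ k)
      _ = mixProd w P n x := rfl
    have htop : mixProd w P n x ≠ ⊤ := ne_top_of_le_ne_top ENNReal.ofReal_ne_top hub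
    have htR : 0 < (mixProd w P n x).toReal := ENNReal.toReal_pos (ne_of_gt hlb) htop
    have htle : (mixProd w P n x).toReal ≤ Real.exp (-((n : ℝ) * (H k - γ))) :=
      ENNReal.toReal_le_of_le_ofReal (Real.exp_nonneg _) hub
    have hlog : Real.log ((mixProd w P n x).toReal) ≤ -((n : ℝ) * (H k - γ)) := by
      calc Real.log ((mixProd w P n x).toReal)
          ≤ Real.log (Real.exp (-((n : ℝ) * (H k - γ)))) := Real.log_le_log htR htle
      _ = -((n : ℝ) * (H k - γ)) := Real.log_exp _
    show H i - γ ≤ (1 / (n : ℝ)) * Real.log (1 / (mixProd w P n x).toReal)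
    rw [show (1:ℝ) / (mixProd w P n x).toReal = ((mixProd w P n x).toReal)⁻¹ from one_div _,
      Real.log_inv]
    have hnR : (0:ℝ) < n := by exact_mod_cast hn1
    calc H i - γ ≤ H k - γ := hHki
    _ = (1 / (n : ℝ)) * ((n : ℝ) * (H k - γ)) := by field_simp
    _ ≤ (1 / (n : ℝ)) * (-Real.log ((mixProd w P n x).toReal)) := by
        apply mul_le_mul_of_nonneg_left (by linarith) (by positivity)
  -- pointwise lower bound for the indicator of the event
  have hpt : ∀ x : Fin n → X,
      (∑ k ∈ Ki, ENNReal.ofReal (w k) * (Good k).indicator (fun y => ∏ t, P k (y t)) x)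
        ≤ Ev.indicator (mixProd w P n) x := by
    intro x
    by_cases hxE : x ∈ Ev
    · rw [Set.indicator_of_mem hxE]
      calc ∑ k ∈ Ki, ENNReal.ofReal (w k) * (Good k).indicator (fun y => ∏ t, P k (y t)) x
          ≤ ∑ k ∈ Ki, ENNReal.ofReal (w k) * ∏ t, P k (x t) :=
            Finset.sum_le_sum (fun k _ =>
              mul_le_mul_right (Set.indicator_le_self _ _ x) _)
      _ ≤ ∑ k', ENNReal.ofReal (w k') * ∏ t, P k' (x t) :=
          Finset.sum_le_sum_of_subset (Finset.filter_subset _ _)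
      _ = mixProd w P n x := rfl
    · rw [Set.indicator_of_notMem hxE]
      apply le_of_eq
      apply Finset.sum_eq_zero
      intro k hk
      by_cases hxG : x ∈ Good k
      · have hzero : ∏ t, P k (x t) = 0 := by
          by_contra h
          exact hxE (hmem k hk x hxG (pos_iff_ne_zero.mpr h))
        rw [Set.indicator_of_mem hxG]
        simp [hzero]
      · rw [Set.indicator_of_notMem hxG, mul_zero]
  -- lower bound for the Good-set probability
  have hGoodLB : ∀ k : Fin m,
      1 - ENNReal.ofReal (m * εb)
        ≤ ∑' x : Fin n → X, (Good k).indicator (fun y => ∏ t, P k (y t)) x := by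
    intro k
    have htot : ∑' x : Fin n → X, ∏ t, P k (x t) = 1 := by
      calc ∑' x : Fin n → X, ∏ t, P k (x t)
          = ∑' x : Fin n → X, ENNReal.ofReal (∏ t, q k (x t)) := tsum_congr (hprod_of k n)
      _ = ENNReal.ofReal (∑' x : Fin n → X, ∏ t, q k (x t)) :=
          (ENNReal.ofReal_tsum_of_nonneg
            (fun x => Finset.prod_nonneg fun t _ => hq0 k _) (hWr k n).1).symm
      _ = 1 := by rw [(hWr k n).2, ENNReal.ofReal_one]
    have hsplit :
        (∑' x : Fin n → X, (Good k).indicator (fun y => ∏ t, P k (y t)) x) +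
          ∑' x : Fin n → X, (Good k)ᶜ.indicator (fun y => ∏ t, P k (y t)) x = 1 := by
      rw [← ENNReal.tsum_add, ← htot]
      apply tsum_congr
      intro x
      exact congrFun (Set.indicator_self_add_compl (Good k) (fun y => ∏ t, P k (y t))) x
    have hbadUB : ∑' x : Fin n → X, (Good k)ᶜ.indicator (fun y => ∏ t, P k (y t)) x
        ≤ ENNReal.ofReal ((m : ℝ) * εb) := by
      have hptb : ∀ x : Fin n → X,
          (Good k)ᶜ.indicator (fun y => ∏ t, P k (y t)) x ≤
            ∑ j : Fin m, (if ENNReal.ofReal (Real.exp (-((n : ℝ) * (H k - γ)))) < ∏ t, P j (x t)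
              then ∏ t, P k (x t) else 0) := by
        intro x
        by_cases hx : x ∈ (Good k)ᶜ
        · rw [Set.indicator_of_mem hx]
          have hx' : ¬ ∀ j, ∏ t, P j (x t) ≤ ENNReal.ofReal (Real.exp (-((n : ℝ) * (H k - γ)))) := hx
          push_neg at hx'
          obtain ⟨j, hj⟩ := hx'
          calc ∏ t, P k (x t)
              = (if ENNReal.ofReal (Real.exp (-((n : ℝ) * (H k - γ)))) < ∏ t, P j (x t)
                  then ∏ t, P k (x t) else 0) := (if_pos hj).symm
          _ ≤ _ := Finset.single_le_sum (f := fun j : Fin m =>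
                if ENNReal.ofReal (Real.exp (-((n : ℝ) * (H k - γ)))) < ∏ t, P j (x t)
                  then ∏ t, P k (x t) else 0)
                (fun j' _ => zero_le) (Finset.mem_univ j)
        · rw [Set.indicator_of_notMem hx]
          exact zero_le
      calc ∑' x : Fin n → X, (Good k)ᶜ.indicator (fun y => ∏ t, P k (y t)) x
          ≤ ∑' x : Fin n → X, ∑ j : Fin m,
              (if ENNReal.ofReal (Real.exp (-((n : ℝ) * (H k - γ)))) < ∏ t, P j (x t)
                then ∏ t, P k (x t) else 0) :=
            Summable.tsum_le_tsum hptb ENNReal.summable ENNReal.summable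
      _ = ∑ j : Fin m, ∑' x : Fin n → X,
              (if ENNReal.ofReal (Real.exp (-((n : ℝ) * (H k - γ)))) < ∏ t, P j (x t)
                then ∏ t, P k (x t) else 0) := Summable.tsum_finsetSum (fun _ _ => ENNReal.summable)
      _ ≤ ∑ _j : Fin m, ENNReal.ofReal εb :=
          Finset.sum_le_sum (fun j _ => hN k j n (hnN k j) hn1)
      _ = (m : ℝ≥0∞) * ENNReal.ofReal εb := by
          simp [Finset.sum_const, Finset.card_univ, mul_comm]
      _ = ENNReal.ofReal ((m : ℝ) * εb) := by
          rw [ENNReal.ofReal_mul (by positivity : (0:ℝ) ≤ (m:ℝ)), ENNReal.ofReal_natCast]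
    rw [tsub_le_iff_right]
    calc (1 : ℝ≥0∞) = _ := hsplit.symm
    _ ≤ (∑' x : Fin n → X, (Good k).indicator (fun y => ∏ t, P k (y t)) x) +
          ENNReal.ofReal ((m : ℝ) * εb) := add_le_add_right hbadUB _
  -- put everything together
  have hchain : ∑ k ∈ Ki, ENNReal.ofReal (w k) * (1 - ENNReal.ofReal ((m : ℝ) * εb))
      ≤ ∑' x : {y : Fin n → X //
            H i - γ ≤ (1 / (n : ℝ)) * Real.log (1 / (mixProd w P n y).toReal)},
          mixProd w P n (x : Fin n → X) := by
    have hsub : (∑' x : {y : Fin n → X //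
            H i - γ ≤ (1 / (n : ℝ)) * Real.log (1 / (mixProd w P n y).toReal)},
          mixProd w P n (x : Fin n → X))
        = ∑' x : Fin n → X, Ev.indicator (mixProd w P n) x := tsum_subtype Ev (mixProd w P n)
    rw [hsub]
    calc ∑ k ∈ Ki, ENNReal.ofReal (w k) * (1 - ENNReal.ofReal ((m : ℝ) * εb))
        ≤ ∑ k ∈ Ki, ENNReal.ofReal (w k) *
            (∑' x : Fin n → X, (Good k).indicator (fun y => ∏ t, P k (y t)) x) :=
          Finset.sum_le_sum (fun k _ => mul_le_mul_right (hGoodLB k) _)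
    _ = ∑ k ∈ Ki, ∑' x : Fin n → X,
          ENNReal.ofReal (w k) * (Good k).indicator (fun y => ∏ t, P k (y t)) x := by
        apply Finset.sum_congr rfl
        intro k _
        rw [ENNReal.tsum_mul_left]
    _ = ∑' x : Fin n → X, ∑ k ∈ Ki,
          ENNReal.ofReal (w k) * (Good k).indicator (fun y => ∏ t, P k (y t)) x :=
        (Summable.tsum_finsetSum (fun _ _ => ENNReal.summable)).symm
    _ ≤ ∑' x : Fin n → X, Ev.indicator (mixProd w P n) x :=
        Summable.tsum_le_tsum hpt ENNReal.summable ENNReal.summable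
  refine le_trans ?_ hchain
  -- final real-number estimate
  have hA_eq : Aweight w ((i : ℕ) + 1) = ∑ k ∈ Ki, w k := rfl
  have hA0 : 0 ≤ Aweight w ((i : ℕ) + 1) := by
    rw [hA_eq]
    exact Finset.sum_nonneg (fun k _ => (hw k).le)
  have hA1 : Aweight w ((i : ℕ) + 1) ≤ 1 := by
    rw [hA_eq, ← hw1]
    exact Finset.sum_le_sum_of_subset_of_nonneg (Finset.filter_subset _ _)
      (fun k _ _ => (hw k).le)
  have hβγ : (m : ℝ) * εb ≤ γ := by
    rw [hεb, mul_div_assoc']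
    rw [div_le_iff₀ (by positivity : (0:ℝ) < (m:ℝ) + 1)]
    nlinarith [hγ]
  have hβ0 : 0 ≤ (m : ℝ) * εb := by positivity
  rcases le_or_gt ((m : ℝ) * εb) 1 with hβ1 | hβ1
  · have h1 : (1 : ℝ≥0∞) - ENNReal.ofReal ((m : ℝ) * εb)
        = ENNReal.ofReal (1 - (m : ℝ) * εb) := by
      rw [ENNReal.ofReal_sub _ hβ0, ENNReal.ofReal_one]
    rw [h1]
    calc ENNReal.ofReal (Aweight w ((i : ℕ) + 1) - γ)
        ≤ ENNReal.ofReal (Aweight w ((i : ℕ) + 1) * (1 - (m : ℝ) * εb)) := by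
          apply ENNReal.ofReal_le_ofReal
          nlinarith [hA0, hA1, hβγ, hβ0]
    _ = ENNReal.ofReal (Aweight w ((i : ℕ) + 1)) * ENNReal.ofReal (1 - (m : ℝ) * εb) :=
        ENNReal.ofReal_mul hA0
    _ = (∑ k ∈ Ki, ENNReal.ofReal (w k)) * ENNReal.ofReal (1 - (m : ℝ) * εb) := by
        rw [hA_eq, ENNReal.ofReal_sum_of_nonneg (fun k _ => (hw k).le)]
    _ = ∑ k ∈ Ki, ENNReal.ofReal (w k) * ENNReal.ofReal (1 - (m : ℝ) * εb) :=
        Finset.sum_mul _ _ _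
  · have h0 : Aweight w ((i : ℕ) + 1) - γ ≤ 0 := by linarith
    rw [ENNReal.ofReal_eq_zero.mpr h0]
    exact zero_le
end

section
/- Mixture upper deviation: under the same mixture setup, for every γ > 0 there exists n_0 such that for all n ≥ n_0 and all i ∈ {1,…,m}, Pr[ (1/n) log(1/P_{X^n}(X^n)) ≤ H(X_i) + γ ] ≥ 1 − A_i − γ, where A_i = ∑_{j=1}^{i−1} α_j. -/
open MeasureTheory ProbabilityTheory Set Function Filter
open scoped ENNReal

section Infra
variable {X : Type*} [Countable X] [MeasurableSpace X] [DiscreteMeasurableSpace X]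

lemma meas_eq_tsum_singleton {α : Type*} [Countable α] [MeasurableSpace α]
    [MeasurableSingletonClass α] (ν : Measure α) (S : Set α) :
    ν S = ∑' y : S, ν {(y : α)} := by
  have := tsum_measure_preimage_singleton (μ := ν) (S.to_countable) (f := id)
    (fun y _ => by simpa using measurableSet_singleton y)
  simpa using this.symm

omit [Countable X] [DiscreteMeasurableSpace X] in
lemma piSingletonMeas {n : ℕ} (μ : Measure X) [SigmaFinite μ] (y : Fin n → X) :
    (Measure.pi fun _ : Fin n => μ) {y} = ∏ t, μ {y t} := by
  rw [show ({y} : Set (Fin n → X)) = Set.pi univ (fun t => {y t}) by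
    ext z; simp [funext_iff, Set.mem_pi]]
  exact Measure.pi_pi _ _

omit [Countable X] [DiscreteMeasurableSpace X] in
lemma piMapEval {n : ℕ} (μ : Measure X) [IsProbabilityMeasure μ] (t : Fin n) :
    (Measure.pi fun _ : Fin n => μ).map (Function.eval t) = μ := by
  ext A hA
  rw [Measure.map_apply (measurable_pi_apply t) hA, Set.eval_preimage, Measure.pi_pi]
  rw [Finset.prod_eq_single t (fun j _ hj => by simp [Function.update_of_ne hj]) (by simp)]
  simp

omit [Countable X] in
lemma indep_eval {n : ℕ} (μ : Measure X) [IsProbabilityMeasure μ] {i j : Fin n} (hij : i ≠ j) :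
    IndepFun (fun y : Fin n → X => y i) (fun y => y j) (Measure.pi fun _ => μ) := by
  rw [indepFun_iff_measure_inter_preimage_eq_mul]
  intro A B _ _
  classical
  have h1 : (fun y : Fin n → X => y i) ⁻¹' A ∩ (fun y => y j) ⁻¹' B =
      Set.pi univ (Function.update (Function.update (fun _ => univ) i A) j B) := by
    ext y
    simp only [Set.mem_inter_iff, Set.mem_preimage, Set.mem_pi, Set.mem_univ, true_implies]
    constructor
    · rintro ⟨hA, hB⟩ t
      rcases eq_or_ne t j with rfl | htj
      · simpa using hB
      rcases eq_or_ne t i with rfl | hti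
      · simpa [Function.update_of_ne hij, Function.update_of_ne htj] using hA
      · simp [Function.update_of_ne htj, Function.update_of_ne hti]
    · intro h
      refine ⟨?_, ?_⟩
      · have := h i; simpa [Function.update_of_ne hij] using this
      · have := h j; simpa using this
  have h2 : ∀ (t : Fin n) (A : Set X),
      (Measure.pi fun _ : Fin n => μ) ((fun y : Fin n → X => y t) ⁻¹' A) = μ A := by
    intro t A
    have : (fun y : Fin n → X => y t) = Function.eval t := rfl
    rw [this, ← Measure.map_apply (measurable_pi_apply t) (MeasurableSet.of_discrete (s := A)),
      piMapEval]
  rw [h1, Measure.pi_pi, h2, h2]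
  set s := Function.update (Function.update (fun _ : Fin n => (univ : Set X)) i A) j B with hs
  have hji : i ∈ Finset.univ.erase j := Finset.mem_erase.2 ⟨hij, Finset.mem_univ i⟩
  rw [← Finset.mul_prod_erase Finset.univ (fun t => μ (s t)) (Finset.mem_univ j),
    ← Finset.mul_prod_erase _ (fun t => μ (s t)) hji]
  have hrest : ∏ t ∈ (Finset.univ.erase j).erase i, μ (s t) = 1 := by
    apply Finset.prod_eq_one
    intro t ht
    simp only [Finset.mem_erase] at ht
    simp [hs, Function.update_of_ne ht.1, Function.update_of_ne ht.2.1]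
  rw [hrest]
  simp [hs, Function.update_of_ne hij, mul_comm]

set_option maxHeartbeats 1000000 in
lemma aep_upper (p : X → ℝ≥0∞) (hp : ∑' x, p x = 1) (Hk : ℝ)
    (hH : HasSum (fun x => (p x).toReal * Real.log (1 / (p x).toReal)) Hk)
    {δ ε : ℝ} (hδ : 0 < δ) (hε : 0 < ε) :
    ∃ N : ℕ, ∀ n, N ≤ n →
      1 - ENNReal.ofReal ε ≤
        ∑' y : {y : Fin n → X // (∀ t, p (y t) ≠ 0) ∧
            ∑ t, Real.log (1 / (p ((y : Fin n → X) t)).toReal) ≤ n * (Hk + δ)},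
          ∏ t, p ((y : Fin n → X) t) := by
  classical
  -- the measure
  set pm : PMF X := ⟨p, hp ▸ ENNReal.summable.hasSum⟩ with hpm
  set μ : Measure X := pm.toMeasure with hμ
  haveI : IsProbabilityMeasure μ := PMF.toMeasure.isProbabilityMeasure pm
  have hμs : ∀ x : X, μ {x} = p x := fun x =>
    PMF.toMeasure_apply_singleton pm x (MeasurableSet.of_discrete)
  have p_le_one : ∀ x, p x ≤ 1 := fun x => hp ▸ ENNReal.le_tsum x
  have p_ne_top : ∀ x, p x ≠ ∞ := fun x => ((p_le_one x).trans_lt ENNReal.one_lt_top).ne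
  set g : X → ℝ := fun x => Real.log (1 / (p x).toReal) with hgdef
  have hg0 : ∀ x, 0 ≤ g x := by
    intro x
    rcases eq_or_ne (p x) 0 with h | h
    · simp [hgdef, h]
    · apply Real.log_nonneg
      refine one_le_one_div (ENNReal.toReal_pos h (p_ne_top x)) ?_
      simpa using ENNReal.toReal_le_of_le_ofReal one_pos.le (by simpa using p_le_one x)
  set G : X → ℝ := fun x => (p x).toReal * g x with hGdef
  have hG0 : ∀ x, 0 ≤ G x := fun x => mul_nonneg ENNReal.toReal_nonneg (hg0 x)
  have hG : HasSum G Hk := hH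
  have hHk0 : 0 ≤ Hk := hG.nonneg hG0
  set η : ℝ := ε * δ / 8 with hηdef
  have hη : 0 < η := by positivity
  -- truncation finset
  obtain ⟨F, hF⟩ : ∃ F : Finset X, Hk - η < ∑ x ∈ F, G x :=
    (hG.eventually (eventually_gt_nhds (by linarith))).exists
  set gM : X → ℝ := fun x => if x ∈ F then g x else 0 with hgMdef
  set M : ℝ := ∑ x ∈ F, g x with hMdef
  have hgM0 : ∀ x, 0 ≤ gM x := by
    intro x; rw [hgMdef]; dsimp only; split <;> simp [hg0 x]
  have hgM_le_g : ∀ x, gM x ≤ g x := by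
    intro x; rw [hgMdef]; dsimp only; split <;> simp [hg0 x]
  have hM0 : 0 ≤ M := Finset.sum_nonneg fun x _ => hg0 x
  have hgM_le_M : ∀ x, gM x ≤ M := by
    intro x; rw [hgMdef, hMdef]; dsimp only
    split
    · exact Finset.single_le_sum (fun x _ => hg0 x) (by assumption)
    · exact hM0
  have hgM_meas : Measurable gM := measurable_of_countable gM
  have hg_meas : Measurable g := measurable_of_countable g
  -- integrals over μ
  have hint_eq : ∀ f : X → ℝ, Integrable f μ → ∫ x, f x ∂μ = ∑' x, (p x).toReal * f x := by
    intro f hf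
    rw [integral_countable' hf]
    simp [measureReal_def, hμs, smul_eq_mul]
  have hg_int : Integrable g μ := by
    refine ⟨hg_meas.aestronglyMeasurable, ?_⟩
    rw [hasFiniteIntegral_iff_ofReal (Eventually.of_forall hg0), lintegral_countable']
    have hterm : ∀ x : X, ENNReal.ofReal (g x) * μ {x} = ENNReal.ofReal (G x) := by
      intro x
      rw [hμs, hGdef]
      conv_lhs => rw [show p x = ENNReal.ofReal ((p x).toReal) by
        rw [ENNReal.ofReal_toReal (p_ne_top x)]]
      rw [← ENNReal.ofReal_mul (hg0 x)]
      simp [mul_comm]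
    simp_rw [hterm]
    rw [← ENNReal.ofReal_tsum_of_nonneg hG0 hG.summable]
    exact ENNReal.ofReal_lt_top
  have hgM_int : Integrable gM μ :=
    hg_int.mono' hgM_meas.aestronglyMeasurable
      (Eventually.of_forall fun x => by
        rw [Real.norm_of_nonneg (hgM0 x)]; exact hgM_le_g x)
  have hgMsq_int : Integrable (fun x => gM x ^ 2) μ :=
    (hgM_int.const_mul M).mono' ((hgM_meas.pow_const 2).aestronglyMeasurable)
      (Eventually.of_forall fun x => by
        rw [Real.norm_of_nonneg (by positivity), sq]
        exact mul_le_mul_of_nonneg_right (hgM_le_M x) (hgM0 x))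
  have hEg : ∫ x, g x ∂μ = Hk := by rw [hint_eq g hg_int]; exact hG.tsum_eq
  set EgM : ℝ := ∑ x ∈ F, G x with hEgMdef
  have hEgM : ∫ x, gM x ∂μ = EgM := by
    rw [hint_eq gM hgM_int]
    rw [tsum_eq_sum (s := F) (fun x hx => by simp [hgMdef, hx])]
    exact Finset.sum_congr rfl fun x hx => by simp [hgMdef, hx, hGdef]
  have hEgM_le : EgM ≤ Hk := hG.tsum_eq ▸ Summable.sum_le_tsum F (fun x _ => hG0 x) hG.summable
  have hEgM0 : 0 ≤ EgM := Finset.sum_nonneg fun x _ => hG0 x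
  have hEgMsq : ∫ x, gM x ^ 2 ∂μ ≤ M * Hk := by
    rw [hint_eq _ hgMsq_int]
    rw [tsum_eq_sum (s := F) (fun x hx => by simp [hgMdef, hx])]
    calc ∑ x ∈ F, (p x).toReal * gM x ^ 2
        ≤ ∑ x ∈ F, M * ((p x).toReal * gM x) := by
          refine Finset.sum_le_sum fun x hx => ?_
          rw [sq]
          calc (p x).toReal * (gM x * gM x) ≤ (p x).toReal * (M * gM x) :=
                mul_le_mul_of_nonneg_left
                  (mul_le_mul_of_nonneg_right (hgM_le_M x) (hgM0 x)) ENNReal.toReal_nonneg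
            _ = M * ((p x).toReal * gM x) := by ring
      _ = M * ∑ x ∈ F, (p x).toReal * gM x := by rw [Finset.mul_sum]
      _ ≤ M * Hk := by
          refine mul_le_mul_of_nonneg_left ?_ hM0
          calc ∑ x ∈ F, (p x).toReal * gM x = ∑ x ∈ F, G x := by
                refine Finset.sum_congr rfl fun x hx => by simp [hgMdef, hx, hGdef]
            _ ≤ Hk := hEgM_le
  -- product space
  set N : ℕ := max 1 ⌈8 * M * Hk / (δ ^ 2 * ε)⌉₊ with hNdef
  refine ⟨N, fun n hn => ?_⟩
  have hn1 : 1 ≤ n := le_trans (le_max_left _ _) hn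
  have hnpos : (0:ℝ) < n := by exact_mod_cast hn1
  set μn : Measure (Fin n → X) := Measure.pi (fun _ => μ) with hμndef
  haveI : IsProbabilityMeasure μn := by
    constructor
    rw [hμndef, ← Set.pi_univ Set.univ, Measure.pi_pi]
    simp
  have mble : ∀ S : Set (Fin n → X), MeasurableSet S := fun S => S.to_countable.measurableSet
  have mp : ∀ t : Fin n, MeasurePreserving (Function.eval t) μn μ :=
    fun t => ⟨measurable_pi_apply t, piMapEval μ t⟩
  have key_int : ∀ (t : Fin n) (f : X → ℝ), ∫ y, f (y t) ∂μn = ∫ x, f x ∂μ := by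
    intro t f
    have h0 : ∫ x, f x ∂μ = ∫ x, f x ∂(μn.map (Function.eval t)) := by rw [(mp t).map_eq]
    rw [h0, integral_map (measurable_pi_apply t).aemeasurable
      (measurable_of_countable f).aestronglyMeasurable]
  set Y : Fin n → (Fin n → X) → ℝ := fun t y => gM (y t) with hYdef
  have hYmeas : ∀ t, Measurable (Y t) := fun t => hgM_meas.comp (measurable_pi_apply t)
  have hYbdd : ∀ t, MemLp (Y t) ⊤ μn := fun t =>
    memLp_top_of_bound (hYmeas t).aestronglyMeasurable M
      (Eventually.of_forall fun y => by
        rw [hYdef]; dsimp only; rw [Real.norm_of_nonneg (hgM0 _)]; exact hgM_le_M _)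
  have hY2 : ∀ t, MemLp (Y t) 2 μn := fun t => (hYbdd t).mono_exponent le_top
  have hYint : ∀ t, Integrable (Y t) μn := fun t => (hY2 t).integrable one_le_two
  have hYE : ∀ t, ∫ y, Y t y ∂μn = EgM := fun t => (key_int t gM).trans hEgM
  have hYvar : ∀ t, variance (Y t) μn ≤ M * Hk := by
    intro t
    refine (variance_le_expectation_sq (hYmeas t).aestronglyMeasurable).trans ?_
    have h1 : ∫ y, (gM (y t)) ^ 2 ∂μn = ∫ x, gM x ^ 2 ∂μ := key_int t (fun x => gM x ^ 2)
    calc μn[(Y t) ^ 2] = ∫ y, (gM (y t))^2 ∂μn := by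
          refine integral_congr_ae (Eventually.of_forall fun y => ?_)
          simp [hYdef]
      _ ≤ M * Hk := h1 ▸ hEgMsq
  set S : (Fin n → X) → ℝ := ∑ t, Y t with hSdef
  have hSapp : ∀ y, S y = ∑ t, gM (y t) := fun y => by
    rw [hSdef, Finset.sum_apply]
  have hS2 : MemLp S 2 μn := memLp_finsetSum' _ (fun t _ => hY2 t)
  have hSE : μn[S] = n * EgM := by
    rw [hSdef]
    simp only [Finset.sum_apply]
    rw [integral_finset_sum _ (fun t _ => hYint t)]
    simp [hYE, mul_comm]
  have hSvar : variance S μn ≤ n * (M * Hk) := by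
    rw [hSdef, IndepFun.variance_sum (fun t _ => hY2 t)
      (fun i _ j _ hij => ((indep_eval μ hij).comp hgM_meas hgM_meas))]
    calc ∑ t : Fin n, variance (Y t) μn ≤ ∑ _t : Fin n, M * Hk :=
          Finset.sum_le_sum fun t _ => hYvar t
      _ = n * (M * Hk) := by simp [mul_comm]
  set c : ℝ := n * δ / 2 with hcdef
  have hc : 0 < c := by positivity
  have hMHk : 0 ≤ M * Hk := mul_nonneg hM0 hHk0
  have cheb : μn {y | c ≤ |S y - μn[S]|} ≤ ENNReal.ofReal (ε / 2) := by
    refine (meas_ge_le_variance_div_sq hS2 hc).trans ?_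
    apply ENNReal.ofReal_le_ofReal
    rw [div_le_iff₀ (by positivity)]
    have hnN : (8 * M * Hk) / (δ^2 * ε) ≤ (n:ℝ) := by
      calc (8*M*Hk)/(δ^2*ε) ≤ (⌈8*M*Hk/(δ^2*ε)⌉₊ : ℝ) := by
            have := Nat.le_ceil (8*M*Hk/(δ^2*ε)); simpa [mul_assoc] using this
        _ ≤ (N : ℝ) := by exact_mod_cast le_max_right 1 _
        _ ≤ n := by exact_mod_cast hn
    have h8 : 8 * (M * Hk) ≤ n * (δ^2 * ε) := by
      rw [div_le_iff₀ (by positivity)] at hnN; nlinarith [hnN]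
    calc variance S μn ≤ n * (M * Hk) := hSvar
      _ ≤ ε / 2 * c ^ 2 := by
          rw [hcdef]
          nlinarith [mul_le_mul_of_nonneg_left h8 hnpos.le]
  set Z : (Fin n → X) → ℝ := fun y => ∑ t, (g (y t) - gM (y t)) with hZdef
  have hZ0 : ∀ y, 0 ≤ Z y := fun y => Finset.sum_nonneg fun t _ =>
    sub_nonneg.2 (hgM_le_g _)
  have hcomp_int : ∀ (t : Fin n) (f : X → ℝ), Integrable f μ →
      Integrable (fun y : Fin n → X => f (y t)) μn := fun t f hf =>
    ((mp t).integrable_comp hf.aestronglyMeasurable).2 hf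
  have hterm_int : ∀ t : Fin n, Integrable (fun y : Fin n → X => g (y t) - gM (y t)) μn :=
    fun t => ((hcomp_int t g hg_int).sub (hcomp_int t gM hgM_int))
  have hZint : Integrable Z μn := by
    rw [hZdef]
    exact integrable_finset_sum _ (fun t _ => hterm_int t)
  have hZE : ∫ y, Z y ∂μn = n * (Hk - EgM) := by
    rw [hZdef, integral_finset_sum _ (fun t _ => hterm_int t)]
    have h1 : ∀ t : Fin n, ∫ y, (g (y t) - gM (y t)) ∂μn = Hk - EgM := by
      intro t
      rw [integral_sub (hcomp_int t g hg_int) (hcomp_int t gM hgM_int),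
        key_int t g, key_int t gM, hEg, hEgM]
    simp [h1, mul_comm]
    ring
  have hHkEgM : Hk - EgM ≤ η := by rw [hEgMdef]; linarith [hF]
  have markov : μn {y | c ≤ Z y} ≤ ENNReal.ofReal (ε / 4) := by
    have h1 := mul_meas_ge_le_integral_of_nonneg (Eventually.of_forall hZ0) hZint c
    rw [hZE] at h1
    have h2 : (μn {y | c ≤ Z y}).toReal ≤ ε / 4 := by
      have hle : c * (μn {y | c ≤ Z y}).toReal ≤ n * η := by
        refine h1.trans ?_
        exact mul_le_mul_of_nonneg_left hHkEgM hnpos.le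
      rw [hcdef, hηdef] at hle
      nlinarith [ENNReal.toReal_nonneg (a := μn {y | c ≤ Z y}), mul_pos hnpos hδ]
    exact (ENNReal.le_ofReal_iff_toReal_le (measure_ne_top μn _) (by positivity)).2 h2
  set B1 : Set (Fin n → X) := {y | c ≤ |S y - μn[S]|} with hB1
  set B2 : Set (Fin n → X) := {y | c ≤ Z y} with hB2
  set Dc : Set (Fin n → X) := {y | ∃ t, p (y t) = 0} with hDcdef
  have hDc : μn Dc = 0 := by
    rw [meas_eq_tsum_singleton]
    have h0 : ∀ y : Dc, μn {(y : Fin n → X)} = 0 := by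
      rintro ⟨y, t, ht⟩
      rw [hμndef, piSingletonMeas]
      exact Finset.prod_eq_zero (Finset.mem_univ t) (by rw [hμs]; exact ht)
    simp [h0]
  have hBsub : {y : Fin n → X | (n:ℝ) * (Hk + δ) < ∑ t, g (y t)} ⊆ B1 ∪ B2 := by
    intro y hy
    by_contra hcon
    rw [Set.mem_union] at hcon; push_neg at hcon
    obtain ⟨h1, h2⟩ := hcon
    rw [hB1, Set.mem_setOf_eq, not_le] at h1
    rw [hB2, Set.mem_setOf_eq, not_le] at h2
    have habs := abs_lt.1 h1
    have hSy : S y < n * EgM + c := by rw [hSE] at habs; linarith [habs.2]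
    have hsum : ∑ t, g (y t) = S y + Z y := by
      rw [hSapp, hZdef]
      rw [← Finset.sum_add_distrib]
      exact Finset.sum_congr rfl fun t _ => by ring
    rw [Set.mem_setOf_eq] at hy
    have hlt : (n:ℝ) * (Hk + δ) < n * EgM + c + c := by rw [hsum] at hy; linarith
    rw [hcdef] at hlt
    nlinarith [hEgM_le, hnpos]
  have hBbound : μn {y : Fin n → X | (n:ℝ) * (Hk + δ) < ∑ t, g (y t)} ≤ ENNReal.ofReal ε := by
    refine (measure_mono hBsub).trans ?_
    refine (measure_union_le _ _).trans ?_
    refine (add_le_add cheb markov).trans ?_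
    rw [← ENNReal.ofReal_add (by positivity) (by positivity)]
    exact ENNReal.ofReal_le_ofReal (by linarith)
  set T : Set (Fin n → X) :=
    {y | (∀ t, p (y t) ≠ 0) ∧ ∑ t, g (y t) ≤ (n:ℝ) * (Hk + δ)} with hTdef
  have hTcompl : T = ({y : Fin n → X | (n:ℝ) * (Hk + δ) < ∑ t, g (y t)} ∪ Dc)ᶜ := by
    ext y
    simp only [hTdef, hDcdef, Set.mem_setOf_eq, Set.mem_compl_iff, Set.mem_union, not_or,
      not_lt, not_exists]
    tauto
  have hμT : 1 - ENNReal.ofReal ε ≤ μn T := by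
    rw [hTcompl, prob_compl_eq_one_sub (mble _)]
    refine tsub_le_tsub_left ?_ 1
    refine (measure_union_le _ _).trans ?_
    rw [hDc, add_zero]; exact hBbound
  have hfinal : μn T = ∑' y : T, ∏ t, p ((y : Fin n → X) t) := by
    rw [meas_eq_tsum_singleton]
    refine tsum_congr fun y => ?_
    rw [hμndef, piSingletonMeas]
    exact Finset.prod_congr rfl fun t _ => hμs _
  rw [hfinal] at hμT
  exact hμT

end Infra

lemma tsum_subtype_mono {α : Type*} (f : α → ℝ≥0∞) {S E : Set α} (h : S ⊆ E) :
    ∑' y : S, f y ≤ ∑' y : E, f y := by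
  rw [tsum_subtype, tsum_subtype]
  exact ENNReal.tsum_le_tsum fun y =>
    Set.indicator_le_indicator_of_subset h (fun _ => zero_le) y



open scoped ENNReal

set_option maxHeartbeats 1000000 in
/-- Mixture upper deviation: for a mixture of `m` i.i.d. sources with positive
weights and strictly decreasing (finite) entropies, for every `γ > 0` there is
`n₀` such that for all `n ≥ n₀` and components `i`,
`Pr[(1/n) log(1/P_{X^n}(X^n)) ≤ H(X_i) + γ] ≥ 1 - A_i - γ`. -/
theorem mixture_upper_deviation {X : Type*} [Countable X] {m : ℕ}
    (w : Fin m → ℝ) (P : Fin m → X → ℝ≥0∞) (H : Fin m → ℝ)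
    (hw : ∀ k, 0 < w k) (hw1 : ∑ k, w k = 1)
    (hP : ∀ k, ∑' x, P k x = 1)
    (hH : ∀ k, HasSum (fun x => (P k x).toReal * Real.log (1 / (P k x).toReal)) (H k))
    (hanti : StrictAnti H) (γ : ℝ) (hγ : 0 < γ) :
    ∃ n₀ : ℕ, ∀ n ≥ n₀, ∀ i : Fin m,
      ENNReal.ofReal (1 - Aweight w (i : ℕ) - γ) ≤
        ∑' x : {y : Fin n → X //
            (1 / (n : ℝ)) * Real.log (1 / (mixProd w P n y).toReal) ≤ H i + γ},
          mixProd w P n (x : Fin n → X) := by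

  classical
  letI : MeasurableSpace X := ⊤
  haveI : DiscreteMeasurableSpace X := ⟨fun _ => MeasurableSpace.measurableSet_top⟩
  have hγ2 : 0 < γ / 2 := by positivity
  -- AEP bound for each component
  have haep : ∀ k : Fin m, ∃ N : ℕ, ∀ n, N ≤ n →
      1 - ENNReal.ofReal γ ≤
        ∑' y : {y : Fin n → X // (∀ t, P k (y t) ≠ 0) ∧
            ∑ t, Real.log (1 / (P k ((y : Fin n → X) t)).toReal) ≤ n * (H k + γ / 2)},
          ∏ t, P k ((y : Fin n → X) t) :=
    fun k => aep_upper (P k) (hP k) (H k) (hH k) hγ2 hγ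
  choose N hN using haep
  set N' : Fin m → ℕ := fun k => max 1 ⌈2 * Real.log (1 / w k) / γ⌉₊ with hN'def
  refine ⟨Finset.univ.sup (fun k => max (N k) (N' k)), fun n hn i => ?_⟩
  -- basic facts
  have hnk : ∀ k : Fin m, max (N k) (N' k) ≤ n :=
    fun k => le_trans (Finset.le_sup (f := fun k => max (N k) (N' k)) (Finset.mem_univ k)) hn
  have hn1 : 1 ≤ n := by
    rcases Fin.pos_iff_nonempty.mp i.pos with ⟨⟩
    exact le_trans (le_trans (le_max_left _ _) (le_max_right (N i) (N' i))) (hnk i)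
  have hnpos : (0:ℝ) < n := by exact_mod_cast hn1
  have hwlog : ∀ k : Fin m, (1 / (n:ℝ)) * Real.log (1 / w k) ≤ γ / 2 := by
    intro k
    have h1 : (⌈2 * Real.log (1 / w k) / γ⌉₊ : ℝ) ≤ n := by
      exact_mod_cast le_trans (le_trans (le_max_right _ _) (le_max_right (N k) (N' k))) (hnk k)
    have h2 : 2 * Real.log (1 / w k) / γ ≤ n := le_trans (Nat.le_ceil _) h1
    rw [div_le_iff₀ hγ] at h2
    rw [one_div, inv_mul_le_iff₀ hnpos]
    nlinarith
  have hPle1 : ∀ (k : Fin m) (x : X), P k x ≤ 1 := fun k x => (hP k) ▸ ENNReal.le_tsum x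
  have hPnetop : ∀ (k : Fin m) (x : X), P k x ≠ ∞ :=
    fun k x => ((hPle1 k x).trans_lt ENNReal.one_lt_top).ne
  -- the event
  set E : Set (Fin n → X) :=
    {y | (1 / (n : ℝ)) * Real.log (1 / (mixProd w P n y).toReal) ≤ H i + γ} with hEdef
  -- mixProd ≤ 1
  have hmix_le_one : ∀ y : Fin n → X, mixProd w P n y ≤ 1 := by
    intro y
    calc mixProd w P n y ≤ ∑ k, ENNReal.ofReal (w k) * 1 := by
          refine Finset.sum_le_sum fun k _ => ?_
          exact mul_le_mul_right (Finset.prod_le_one (fun t _ => zero_le)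
            (fun t _ => hPle1 k _)) _
      _ = ENNReal.ofReal (∑ k, w k) := by
          rw [ENNReal.ofReal_sum_of_nonneg (fun k _ => (hw k).le)]
          simp
      _ = 1 := by rw [hw1]; simp
  -- typical sets are inside the event
  have hTsub : ∀ k : Fin m, i ≤ k →
      {y : Fin n → X | (∀ t, P k (y t) ≠ 0) ∧
        ∑ t, Real.log (1 / (P k (y t)).toReal) ≤ n * (H k + γ / 2)} ⊆ E := by
    intro k hik y hy
    obtain ⟨hy0, hysum⟩ := hy
    have hptr : ∀ t, 0 < (P k (y t)).toReal :=
      fun t => ENNReal.toReal_pos (hy0 t) (hPnetop k _)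
    have hprodpos : 0 < ∏ t, (P k (y t)).toReal := Finset.prod_pos fun t _ => hptr t
    have hlb : ENNReal.ofReal (w k) * ∏ t, P k (y t) ≤ mixProd w P n y :=
      Finset.single_le_sum (f := fun k => ENNReal.ofReal (w k) * ∏ t, P k (y t))
        (fun k _ => zero_le) (Finset.mem_univ k)
    have hlbr : w k * ∏ t, (P k (y t)).toReal ≤ (mixProd w P n y).toReal := by
      have := ENNReal.toReal_mono ((hmix_le_one y).trans_lt ENNReal.one_lt_top).ne hlb
      rwa [ENNReal.toReal_mul, ENNReal.toReal_ofReal (hw k).le, ENNReal.toReal_prod] at this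
    have hlbpos : 0 < w k * ∏ t, (P k (y t)).toReal := mul_pos (hw k) hprodpos
    have hlog : Real.log (1 / (mixProd w P n y).toReal) ≤
        Real.log (1 / w k) + ∑ t, Real.log (1 / (P k (y t)).toReal) := by
      rw [one_div, Real.log_inv]
      have h1 : Real.log (w k * ∏ t, (P k (y t)).toReal) ≤
          Real.log (mixProd w P n y).toReal := Real.log_le_log hlbpos hlbr
      have h2 : Real.log (w k * ∏ t, (P k (y t)).toReal)
          = Real.log (w k) + ∑ t, Real.log (P k (y t)).toReal := by
        rw [Real.log_mul (hw k).ne' hprodpos.ne', Real.log_prod (fun t _ => (hptr t).ne')]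
      have h3 : ∀ t : Fin n, Real.log (1 / (P k (y t)).toReal)
          = - Real.log (P k (y t)).toReal := by
        intro t; rw [one_div, Real.log_inv]
      simp only [h3, one_div, Real.log_inv, Finset.sum_neg_distrib]
      linarith [h1, h2]
    have hHki : H k ≤ H i := hanti.antitone hik
    rw [hEdef, Set.mem_setOf_eq]
    calc (1 / (n:ℝ)) * Real.log (1 / (mixProd w P n y).toReal)
        ≤ (1 / (n:ℝ)) * (Real.log (1 / w k) + n * (H k + γ / 2)) := by
          refine mul_le_mul_of_nonneg_left ?_ (by positivity)
          exact hlog.trans (by linarith)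
      _ = (1 / (n:ℝ)) * Real.log (1 / w k) + (H k + γ / 2) := by
          field_simp
      _ ≤ γ / 2 + (H k + γ / 2) := by linarith [hwlog k]
      _ ≤ H i + γ := by linarith
  -- lower bound the tsum
  set Ks : Finset (Fin m) := Finset.univ.filter (fun k => ¬ ((k : ℕ) < (i : ℕ))) with hKs
  have hsplit : ∑' y : E, mixProd w P n (y : Fin n → X)
      = ∑ k, ENNReal.ofReal (w k) * ∑' y : E, ∏ t, P k ((y : Fin n → X) t) := by
    calc ∑' y : E, mixProd w P n (y : Fin n → X)
        = ∑' y : E, ∑ k, ENNReal.ofReal (w k) * ∏ t, P k ((y : Fin n → X) t) := rfl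
      _ = ∑ k, ∑' y : E, ENNReal.ofReal (w k) * ∏ t, P k ((y : Fin n → X) t) :=
          Summable.tsum_finsetSum (fun k _ => ENNReal.summable)
      _ = ∑ k, ENNReal.ofReal (w k) * ∑' y : E, ∏ t, P k ((y : Fin n → X) t) :=
          Finset.sum_congr rfl fun k _ => ENNReal.tsum_mul_left
  have hKbound : ∀ k ∈ Ks,
      (1 - ENNReal.ofReal γ) ≤ ∑' y : E, ∏ t, P k ((y : Fin n → X) t) := by
    intro k hk
    have hik : i ≤ k := by
      rw [hKs, Finset.mem_filter] at hk
      exact Fin.le_def.mpr (not_lt.mp hk.2)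
    refine le_trans (hN k n (le_trans (le_max_left _ _) (hnk k))) ?_
    exact tsum_subtype_mono (fun y => ∏ t, P k (y t)) (hTsub k hik)
  set a : ℝ := ∑ k ∈ Ks, w k with hadef
  have hAa : Aweight w (i : ℕ) + a = 1 := by
    rw [Aweight, hadef, hKs, Finset.sum_filter_add_sum_filter_not]
    exact hw1
  have ha0 : 0 ≤ a := Finset.sum_nonneg fun k _ => (hw k).le
  have hA0 : 0 ≤ Aweight w (i : ℕ) := Finset.sum_nonneg fun k _ => (hw k).le
  have ha1 : a ≤ 1 := by linarith
  have harith : ENNReal.ofReal (1 - Aweight w (i : ℕ) - γ)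
      ≤ ENNReal.ofReal a * (1 - ENNReal.ofReal γ) := by
    rcases le_or_gt 1 γ with hγ1 | hγ1
    · rw [ENNReal.ofReal_eq_zero.mpr (by linarith)]
      exact zero_le
    · have h1 : (1 : ℝ≥0∞) - ENNReal.ofReal γ = ENNReal.ofReal (1 - γ) := by
        rw [ENNReal.ofReal_sub 1 hγ.le, ENNReal.ofReal_one]
      rw [h1, ← ENNReal.ofReal_mul ha0]
      exact ENNReal.ofReal_le_ofReal (by nlinarith)
  have hfin : ENNReal.ofReal (1 - Aweight w (i : ℕ) - γ)
      ≤ ∑' y : E, mixProd w P n (y : Fin n → X) := by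
    rw [hsplit]
    calc ENNReal.ofReal (1 - Aweight w (i : ℕ) - γ)
        ≤ ENNReal.ofReal a * (1 - ENNReal.ofReal γ) := harith
      _ = ∑ k ∈ Ks, ENNReal.ofReal (w k) * (1 - ENNReal.ofReal γ) := by
          rw [hadef, ENNReal.ofReal_sum_of_nonneg (fun k _ => (hw k).le), Finset.sum_mul]
      _ ≤ ∑ k ∈ Ks, ENNReal.ofReal (w k) * ∑' y : E, ∏ t, P k ((y : Fin n → X) t) :=
          Finset.sum_le_sum fun k hk => mul_le_mul_right (hKbound k hk) _
      _ ≤ ∑ k, ENNReal.ofReal (w k) * ∑' y : E, ∏ t, P k ((y : Fin n → X) t) :=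
          Finset.sum_le_sum_of_subset_of_nonneg (Finset.subset_univ Ks)
            (fun k _ _ => zero_le)
  exact hfin
end
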